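/- arXiv:2301.05703 — 5 statements merged into one kernel-verified Lean document; each statement's English description precedes it below -/
import Mathlib

section
/- Let 𝕎̃ ⊂ 𝕎 be a finite set of treatment values and κ = (κ_w)_{w∈𝕎̃} real constants; let γ:𝕎×𝒳→ℝ and φ:𝕎×𝒳→ℝ_{>0} be bounded measurable nuisance functions; let S̃:𝒳→ℝ be positive, bounded and measurable with S̃(X) ≤ M·∏_{w∈𝕎̃} φ(w,X) a.s. for some M > 0. Define the augmented SPW residual Ψ = S̃(X)·[ Σ_{w∈𝕎̃} κ_w·( γ(w,X) + 1{W=w}·(Y − γ(w,X))/φ(w,X) ) − Σ_{w∈𝕎̃} κ_w·μ(w,X) ]. If φ ≡ p or γ ≡ μ, then under unconfoundedness, SUTVA, population overlap and bounded outcomes, E[Ψ | σ(X)] = 0 a.s. and E[Ψ² | σ(X)] is a.s. finite. -/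
open MeasureTheory ProbabilityTheory Filter Set

/-- The sub-σ-algebra σ(X) generated by a random element `X`. -/
abbrev sigmaAlg {Ω 𝒳 : Type*} [m𝒳 : MeasurableSpace 𝒳] (X : Ω → 𝒳) : MeasurableSpace Ω :=
  MeasurableSpace.comap X m𝒳

section Helpers

variable {Ω : Type*} {mΩ : MeasurableSpace Ω} {P : Measure Ω}

lemma int_bdd [IsFiniteMeasure P] {f : Ω → ℝ} (hf : AEStronglyMeasurable f P) {C : ℝ}
    (h : ∀ᵐ ω ∂P, |f ω| ≤ C) : Integrable f P :=
  ⟨hf, HasFiniteIntegral.of_bounded (C := C) (h.mono fun ω hω => by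
    simpa [Real.norm_eq_abs] using hω)⟩

lemma ae_eq_sum {ι : Type*} (s : Finset ι) (f g : ι → Ω → ℝ)
    (h : ∀ i ∈ s, f i =ᵐ[P] g i) : ∑ i ∈ s, f i =ᵐ[P] ∑ i ∈ s, g i := by
  have := (eventually_all_finset s).mpr h
  filter_upwards [this] with ω hω
  simp only [Finset.sum_apply]
  exact Finset.sum_congr rfl fun i hi => hω i hi

end Helpers

/-- Key factorization: conditional independence implies the conditional expectation of the
product factorizes. -/
lemma condexp_ind_mul_of_condIndep
    {Ω 𝒳 𝕎 : Type*} [MeasurableSpace Ω] [StandardBorelSpace Ω] [MeasurableSpace 𝒳]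
    [Fintype 𝕎] [DecidableEq 𝕎] [MeasurableSpace 𝕎] [MeasurableSingletonClass 𝕎]
    (P : Measure Ω) [IsProbabilityMeasure P]
    (X : Ω → 𝒳) (hX : Measurable X)
    (W : Ω → 𝕎) (hWm : Measurable W)
    (Ys : 𝕎 → Ω → ℝ) (hYsm : ∀ w', Measurable (Ys w'))
    (CY : ℝ) (hYb : ∀ w' ω, |Ys w' ω| ≤ CY)
    (hInd : CondIndepFun (sigmaAlg X) hX.comap_le W (fun ω => (fun w' => Ys w' ω)) P) (w : 𝕎) :
    P[(fun ω => (if W ω = w then (1:ℝ) else 0) * Ys w ω)|sigmaAlg X] =ᵐ[P]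
      fun ω => ((P[(fun ω => if W ω = w then (1:ℝ) else 0)|sigmaAlg X]) ω) * ((P[Ys w|sigmaAlg X]) ω) := by
  classical
  set Yv : Ω → (𝕎 → ℝ) := fun ω => (fun w' => Ys w' ω) with hYvdef
  have hYvm : Measurable Yv := measurable_pi_lambda _ hYsm
  set ind : Ω → ℝ := fun ω => if W ω = w then (1:ℝ) else 0 with hinddef
  have hindm : Measurable ind :=
    Measurable.ite (hWm (measurableSet_singleton w)) measurable_const measurable_const
  have hindb : ∀ ω, |ind ω| ≤ 1 := fun ω => by
    by_cases h : W ω = w <;> simp [ind, h]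
  have hind_eq : Set.indicator (W ⁻¹' {w}) (fun _ => (1:ℝ)) = ind := by
    funext ω; by_cases h : W ω = w <;> simp [ind, h]
  -- Step A : indicator factorization
  have hA : ∀ t : Set (𝕎 → ℝ), MeasurableSet t →
      P[(fun ω => ind ω * Set.indicator (Yv ⁻¹' t) (fun _ => (1:ℝ)) ω)|sigmaAlg X] =ᵐ[P]
        fun ω => ((P[ind|sigmaAlg X]) ω) * ((P[Set.indicator (Yv ⁻¹' t) (fun _ => (1:ℝ))|sigmaAlg X]) ω) := by
    intro t ht
    have h1 := (condIndepFun_iff_condExp_inter_preimage_eq_mul (μ := P) hWm hYvm).mp hInd {w} t (measurableSet_singleton w) ht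
    have h2 : Set.indicator (W ⁻¹' {w} ∩ Yv ⁻¹' t) (fun _ => (1:ℝ))
        = fun ω => ind ω * Set.indicator (Yv ⁻¹' t) (fun _ => (1:ℝ)) ω := by
      funext ω
      by_cases h : W ω = w <;> by_cases h' : Yv ω ∈ t <;>
        simp [Set.indicator_apply, h, h', ind]
    rw [h2, hind_eq] at h1
    exact h1
  -- generic integrability
  have hint : ∀ (f : Ω → ℝ), Measurable f → ∀ C : ℝ, (∀ ω, |f ω| ≤ C) → Integrable f P :=
    fun f hf C hC => int_bdd hf.aestronglyMeasurable (ae_of_all _ hC)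
  -- the discretization
  set g : ℕ → ℝ → ℝ := fun n y => (⌊y * ((n:ℝ)+1)⌋ : ℝ)/((n:ℝ)+1) with hgdef
  have hnn : ∀ n : ℕ, (0:ℝ) < (n:ℝ)+1 := fun n => by positivity
  have hgm : ∀ n, Measurable (fun ω => g n (Ys w ω)) := by
    intro n
    exact (measurable_from_top.comp
      (Int.measurable_floor.comp ((hYsm w).mul_const _))).div_const _
  have hgapprox : ∀ n y, |y - g n y| ≤ 1/((n:ℝ)+1) := by
    intro n y
    set nn : ℝ := (n:ℝ)+1
    have hn0 : 0 < nn := hnn n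
    have h1 : ((⌊y*nn⌋:ℝ))/nn ≤ y := by
      rw [div_le_iff₀ hn0]; exact Int.floor_le _
    have h2 : y ≤ ((⌊y*nn⌋:ℝ)+1)/nn := by
      rw [le_div_iff₀ hn0]; exact (Int.lt_floor_add_one _).le
    have h3 : ((⌊y*nn⌋:ℝ)+1)/nn - (⌊y*nn⌋:ℝ)/nn = 1/nn := by ring
    rw [hgdef]
    rw [abs_of_nonneg (by linarith)]
    linarith
  have hgb : ∀ n ω, |g n (Ys w ω)| ≤ CY + 1 := by
    intro n ω
    have h1 := hgapprox n (Ys w ω)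
    have h2 := hYb w ω
    have h3 : 1/((n:ℝ)+1) ≤ 1 := by
      rw [div_le_one (hnn n)]; simp
    calc |g n (Ys w ω)| ≤ |Ys w ω| + |Ys w ω - g n (Ys w ω)| := by
          have := abs_sub_abs_le_abs_sub (g n (Ys w ω)) (Ys w ω)
          rw [abs_sub_comm] at this; linarith
      _ ≤ CY + 1 := by linarith
  -- Step B : factorization for the discretized variable
  have hB : ∀ n : ℕ, P[(fun ω => ind ω * g n (Ys w ω))|sigmaAlg X] =ᵐ[P]
      fun ω => ((P[ind|sigmaAlg X]) ω) * ((P[(fun ω => g n (Ys w ω))|sigmaAlg X]) ω) := by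
    intro n
    set nn : ℝ := (n:ℝ)+1 with hnndef
    have hn0 : 0 < nn := hnn n
    set I : Finset ℤ := Finset.Icc ⌊(-CY) * nn⌋ ⌊CY * nn⌋ with hIdef
    have hmem : ∀ ω, ⌊Ys w ω * nn⌋ ∈ I := by
      intro ω
      have h2 := abs_le.mp (hYb w ω)
      refine Finset.mem_Icc.mpr ⟨Int.floor_le_floor ?_, Int.floor_le_floor ?_⟩
      · nlinarith [h2.1]
      · nlinarith [h2.2]
    set t : ℤ → Set (𝕎 → ℝ) := fun k => (fun v => v w) ⁻¹' {y : ℝ | ⌊y * nn⌋ = k} with htdef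
    have htm : ∀ k, MeasurableSet (t k) := by
      intro k
      exact measurable_pi_apply w
        ((Int.measurable_floor.comp (measurable_mul_const nn)) (measurableSet_singleton k))
    set χ : ℤ → Ω → ℝ := fun k => Set.indicator (Yv ⁻¹' (t k)) (fun _ => (1:ℝ)) with hχdef
    have hχ : ∀ (k : ℤ) ω, χ k ω = if ⌊Ys w ω * nn⌋ = k then 1 else 0 := by
      intro k ω
      by_cases h : ⌊Ys w ω * nn⌋ = k <;>
        simp [χ, t, Yv, Set.indicator_apply, h]
    have hχm : ∀ (k : ℤ), Measurable (χ k) := fun k => measurable_const.indicator (hYvm (htm k))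
    have hχb : ∀ (k : ℤ) ω, |χ k ω| ≤ 1 := by
      intro k ω; rw [hχ]; split <;> simp
    have hgsum : ∀ ω, g n (Ys w ω) = ∑ k ∈ I, ((k:ℝ)/nn) * χ k ω := by
      intro ω
      have h5 : ∀ k ∈ I, ((k:ℝ)/nn) * χ k ω
          = if ⌊Ys w ω * nn⌋ = k then ((k:ℝ)/nn) else 0 := by
        intro k _; rw [hχ, mul_ite, mul_one, mul_zero]
      rw [Finset.sum_congr rfl h5, Finset.sum_ite_eq, if_pos (hmem ω)]
    have hint1 : ∀ (k : ℤ), Integrable (fun ω => ((k:ℝ)/nn) * (ind ω * χ k ω)) P := by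
      intro k
      refine hint _ ((measurable_const.mul (hindm.mul (hχm k)))) (|(k:ℝ)/nn|) fun ω => ?_
      rw [abs_mul, abs_mul]
      have h6 : |ind ω| * |χ k ω| ≤ 1 := by
        have := mul_le_mul (hindb ω) (hχb k ω) (abs_nonneg _) zero_le_one
        simpa using this
      have h7 := mul_le_mul_of_nonneg_left h6 (abs_nonneg ((k:ℝ)/nn))
      simpa using h7
    have hint2 : ∀ (k : ℤ), Integrable (fun ω => ((k:ℝ)/nn) * χ k ω) P := by
      intro k
      refine hint _ (measurable_const.mul (hχm k)) (|(k:ℝ)/nn|) fun ω => ?_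
      rw [abs_mul]
      nlinarith [abs_nonneg ((k:ℝ)/nn), hχb k ω, abs_nonneg (χ k ω)]
    -- conditional expectation of the discretized Ys
    have h4 : P[(fun ω => g n (Ys w ω))|sigmaAlg X] =ᵐ[P]
        ∑ k ∈ I, (((k:ℝ)/nn) • P[χ k|sigmaAlg X]) := by
      have he : (fun ω => g n (Ys w ω)) = ∑ k ∈ I, fun ω => ((k:ℝ)/nn) * χ k ω := by
        funext ω; rw [hgsum ω]; simp [Finset.sum_apply]
      rw [he]
      refine (condExp_finsetSum (fun k _ => hint2 k) _).trans ?_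
      refine ae_eq_sum _ _ _ fun k _ => ?_
      have he2 : (fun ω => ((k:ℝ)/nn) * χ k ω) = ((k:ℝ)/nn) • χ k := by
        funext ω; simp [smul_eq_mul]
      rw [he2]
      exact condExp_smul (m := sigmaAlg X) (μ := P) ((k:ℝ)/nn) (χ k)
    have he1 : (fun ω => ind ω * g n (Ys w ω))
        = ∑ k ∈ I, fun ω => ((k:ℝ)/nn) * (ind ω * χ k ω) := by
      funext ω
      simp only [Finset.sum_apply]
      rw [hgsum ω, Finset.mul_sum]
      exact Finset.sum_congr rfl fun k _ => by ring
    calc P[(fun ω => ind ω * g n (Ys w ω))|sigmaAlg X]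
        = P[(∑ k ∈ I, fun ω => ((k:ℝ)/nn) * (ind ω * χ k ω))|sigmaAlg X] := by rw [he1]
      _ =ᵐ[P] ∑ k ∈ I, P[(fun ω => ((k:ℝ)/nn) * (ind ω * χ k ω))|sigmaAlg X] :=
          condExp_finsetSum (fun k _ => hint1 k) _
      _ =ᵐ[P] ∑ k ∈ I, (((k:ℝ)/nn) • fun ω => ((P[ind|sigmaAlg X]) ω) * ((P[χ k|sigmaAlg X]) ω)) := by
          refine ae_eq_sum _ _ _ fun k _ => ?_
          have he2 : (fun ω => ((k:ℝ)/nn) * (ind ω * χ k ω))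
              = ((k:ℝ)/nn) • fun ω => ind ω * χ k ω := by
            funext ω; simp [smul_eq_mul]
          rw [he2]
          refine (condExp_smul (m := sigmaAlg X) (μ := P) ((k:ℝ)/nn) _).trans ?_
          filter_upwards [hA (t k) (htm k)] with ω hω
          simp only [Pi.smul_apply, smul_eq_mul]
          rw [hω]
      _ =ᵐ[P] fun ω => ((P[ind|sigmaAlg X]) ω) * ((P[(fun ω => g n (Ys w ω))|sigmaAlg X]) ω) := by
          filter_upwards [h4] with ω hω
          simp only [Finset.sum_apply, Pi.smul_apply, smul_eq_mul]
          rw [hω]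
          simp only [Finset.sum_apply, Pi.smul_apply, smul_eq_mul, Finset.mul_sum]
          exact Finset.sum_congr rfl fun k _ => by ring
  -- Step C : pass to the limit
  set L : Ω → ℝ := P[(fun ω => ind ω * Ys w ω)|sigmaAlg X] with hLdef
  set R : Ω → ℝ := fun ω => ((P[ind|sigmaAlg X]) ω) * ((P[Ys w|sigmaAlg X]) ω) with hRdef
  have hintYs : Integrable (Ys w) P := hint _ (hYsm w) CY (hYb w)
  have hintindYs : Integrable (fun ω => ind ω * Ys w ω) P := by
    refine hint _ (hindm.mul (hYsm w)) CY fun ω => ?_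
    rw [abs_mul]
    nlinarith [hindb ω, abs_nonneg (ind ω), abs_nonneg (Ys w ω), hYb w ω]
  have hintg : ∀ n, Integrable (fun ω => g n (Ys w ω)) P :=
    fun n => hint _ (hgm n) (CY+1) (hgb n)
  have hintindg : ∀ n, Integrable (fun ω => ind ω * g n (Ys w ω)) P := by
    intro n
    refine hint _ (hindm.mul (hgm n)) (CY+1) fun ω => ?_
    rw [abs_mul]
    nlinarith [hindb ω, abs_nonneg (ind ω), abs_nonneg (g n (Ys w ω)), hgb n ω]
  have hPind : ∀ᵐ ω ∂P, |(P[ind|sigmaAlg X]) ω| ≤ 1 := by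
    have h0 : (0:Ω → ℝ) ≤ᵐ[P] P[ind|sigmaAlg X] :=
      condExp_nonneg (ae_of_all _ fun ω => by by_cases h : W ω = w <;> simp [ind, h])
    have h1 : P[ind|sigmaAlg X] ≤ᵐ[P] P[(fun _ => (1:ℝ))|sigmaAlg X] := by
      refine condExp_mono (hint _ hindm 1 hindb) (integrable_const 1)
        (ae_of_all _ fun ω => ?_)
      by_cases h : W ω = w <;> simp [ind, h]
    have hc : P[(fun _ : Ω => (1:ℝ))|sigmaAlg X] = fun _ => (1:ℝ) := condExp_const hX.comap_le (1:ℝ)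
    rw [hc] at h1
    filter_upwards [h0, h1] with ω h0' h1'
    rw [abs_le]
    refine ⟨?_, h1'⟩
    have : (0:ℝ) ≤ (P[ind|sigmaAlg X]) ω := h0'
    linarith
  have hindSM : AEStronglyMeasurable (P[ind|sigmaAlg X]) P :=
    (stronglyMeasurable_condExp.mono hX.comap_le).aestronglyMeasurable
  have hPindn : ∀ᵐ ω ∂P, ‖(P[ind|sigmaAlg X]) ω‖ ≤ 1 := by
    filter_upwards [hPind] with ω hω; simpa [Real.norm_eq_abs] using hω
  have hmulint : ∀ (f : Ω → ℝ), Integrable (fun ω => ((P[ind|sigmaAlg X]) ω) * ((P[f|sigmaAlg X]) ω)) P :=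
    fun f => Integrable.bdd_mul (c := 1) integrable_condExp hindSM hPindn
  have hC2 : ∀ n : ℕ, ∫ ω, |L ω - R ω| ∂P ≤ 2/((n:ℝ)+1) := by
    intro n
    set nn : ℝ := (n:ℝ)+1
    have hn0 : 0 < nn := hnn n
    set Ln : Ω → ℝ := P[(fun ω => ind ω * g n (Ys w ω))|sigmaAlg X] with hLndef
    set Rn : Ω → ℝ := fun ω => ((P[ind|sigmaAlg X]) ω) * ((P[(fun ω => g n (Ys w ω))|sigmaAlg X]) ω)
      with hRndef
    -- |L - Ln| integral bound
    have e1 : ∫ ω, |L ω - Ln ω| ∂P ≤ 1/nn := by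
      set F : Ω → ℝ := (fun ω => ind ω * Ys w ω) - (fun ω => ind ω * g n (Ys w ω)) with hFdef
      have hFint : Integrable F P := hintindYs.sub (hintindg n)
      have hsub : P[F|sigmaAlg X] =ᵐ[P] L - Ln := condExp_sub hintindYs (hintindg n) _
      calc ∫ ω, |L ω - Ln ω| ∂P
          = ∫ ω, |(P[F|sigmaAlg X]) ω| ∂P := by
            refine integral_congr_ae ?_
            filter_upwards [hsub] with ω hω
            rw [hω]; simp
        _ ≤ ∫ ω, |F ω| ∂P := integral_abs_condExp_le _
        _ ≤ ∫ (_ : Ω), 1/nn ∂P := by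
            refine integral_mono hFint.abs (integrable_const _) fun ω => ?_
            have hF : F ω = ind ω * (Ys w ω - g n (Ys w ω)) := by
              simp [F]; ring
            rw [hF, abs_mul]
            have h1 := hgapprox n (Ys w ω)
            have h2 := hindb ω
            nlinarith [abs_nonneg (ind ω), abs_nonneg (Ys w ω - g n (Ys w ω))]
        _ = 1/nn := by simp
    -- |Rn - R| integral bound
    have e2 : ∫ ω, |Rn ω - R ω| ∂P ≤ 1/nn := by
      set G : Ω → ℝ := (fun ω => g n (Ys w ω)) - Ys w with hGdef
      have hGint : Integrable G P := (hintg n).sub hintYs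
      have hsub : P[G|sigmaAlg X] =ᵐ[P] P[(fun ω => g n (Ys w ω))|sigmaAlg X] - P[Ys w|sigmaAlg X] :=
        condExp_sub (hintg n) hintYs _
      have hintRn : Integrable Rn P := hmulint _
      have hintR : Integrable R P := hmulint _
      calc ∫ ω, |Rn ω - R ω| ∂P
          ≤ ∫ ω, |(P[G|sigmaAlg X]) ω| ∂P := by
            refine integral_mono_ae ((hintRn.sub hintR).abs) integrable_condExp.abs ?_
            filter_upwards [hPind, hsub] with ω h1 h2
            have hd : Rn ω - R ω = (P[ind|sigmaAlg X]) ω *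
                ((P[(fun ω => g n (Ys w ω))|sigmaAlg X]) ω - (P[Ys w|sigmaAlg X]) ω) := by
              simp [Rn, R]; ring
            rw [hd, abs_mul, h2]
            simp only [Pi.sub_apply]
            calc |(P[ind|sigmaAlg X]) ω| *
                |(P[(fun ω => g n (Ys w ω))|sigmaAlg X]) ω - (P[Ys w|sigmaAlg X]) ω|
                ≤ 1 * |(P[(fun ω => g n (Ys w ω))|sigmaAlg X]) ω - (P[Ys w|sigmaAlg X]) ω| :=
                  mul_le_mul_of_nonneg_right h1 (abs_nonneg _)
              _ = _ := one_mul _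
        _ ≤ ∫ ω, |G ω| ∂P := integral_abs_condExp_le _
        _ ≤ ∫ (_ : Ω), 1/nn ∂P := by
            refine integral_mono hGint.abs (integrable_const _) fun ω => ?_
            have hG : G ω = g n (Ys w ω) - Ys w ω := by simp [G]
            rw [hG, abs_sub_comm]
            exact hgapprox n (Ys w ω)
        _ = 1/nn := by simp
    -- combine
    have e3 : ∀ᵐ ω ∂P, |L ω - R ω| ≤ |L ω - Ln ω| + |Rn ω - R ω| := by
      filter_upwards [hB n] with ω hω
      have hLR : Ln ω = Rn ω := hω
      calc |L ω - R ω| ≤ |L ω - Ln ω| + |Ln ω - R ω| := abs_sub_le _ _ _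
        _ = |L ω - Ln ω| + |Rn ω - R ω| := by rw [hLR]
    have hintL : Integrable L P := integrable_condExp
    have hintLn : Integrable Ln P := integrable_condExp
    have hintRn : Integrable Rn P := hmulint _
    have hintR : Integrable R P := hmulint _
    calc ∫ ω, |L ω - R ω| ∂P
        ≤ ∫ ω, (|L ω - Ln ω| + |Rn ω - R ω|) ∂P := by
          refine integral_mono_ae ((hintL.sub hintR).abs)
            (((hintL.sub hintLn).abs).add ((hintRn.sub hintR).abs)) e3
      _ = ∫ ω, |L ω - Ln ω| ∂P + ∫ ω, |Rn ω - R ω| ∂P :=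
          integral_add ((hintL.sub hintLn).abs) ((hintRn.sub hintR).abs)
      _ ≤ 1/nn + 1/nn := add_le_add e1 e2
      _ = 2/nn := by ring
  -- conclude
  have htend : Tendsto (fun n : ℕ => 2/((n:ℝ)+1)) atTop (nhds 0) := by
    have h := tendsto_one_div_add_atTop_nhds_zero_nat.const_mul (2:ℝ)
    simp only [mul_zero] at h
    refine h.congr fun n => ?_
    ring
  have h0 : ∫ ω, |L ω - R ω| ∂P ≤ 0 := ge_of_tendsto' htend hC2
  have hintR : Integrable R P := hmulint _
  have hzero : ∫ ω, |L ω - R ω| ∂P = 0 :=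
    le_antisymm h0 (integral_nonneg fun ω => abs_nonneg _)
  have hae := (integral_eq_zero_iff_of_nonneg (fun ω => abs_nonneg _)
    ((integrable_condExp.sub hintR).abs)).mp hzero
  filter_upwards [hae] with ω hω
  have h1 : |L ω - R ω| = 0 := hω
  exact sub_eq_zero.mp (abs_eq_zero.mp h1)

lemma abs_mul_le' {a b A B : ℝ} (ha : |a| ≤ A) (hb : |b| ≤ B) (hA : 0 ≤ A) : |a*b| ≤ A*B := by
  rw [abs_mul]
  exact mul_le_mul ha hb (abs_nonneg _) hA


theorem stmt_12
    {Ω 𝒳 𝕎 : Type*} [MeasurableSpace Ω] [StandardBorelSpace Ω] [MeasurableSpace 𝒳]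
    [Fintype 𝕎] [DecidableEq 𝕎] [MeasurableSpace 𝕎] [MeasurableSingletonClass 𝕎]
    (P : Measure Ω) [IsProbabilityMeasure P]
    (X : Ω → 𝒳) (hX : Measurable X)
    (W : Ω → 𝕎) (hWm : Measurable W)
    (Ys : 𝕎 → Ω → ℝ) (hYsm : ∀ w', Measurable (Ys w'))
    (CY : ℝ) (hYbdd : ∀ w' ω, |Ys w' ω| ≤ CY)
    (Y : Ω → ℝ)
    (hSUTVA : ∀ ω, Y ω = ∑ w' : 𝕎, (if W ω = w' then (1:ℝ) else 0) * Ys w' ω)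
    (hUnconf : CondIndepFun (sigmaAlg X) hX.comap_le W (fun ω => (fun w' => Ys w' ω)) P)
    (p : 𝕎 → 𝒳 → ℝ) (hpm : ∀ w', Measurable (p w'))
    (hprop : ∀ w' : 𝕎,
      P[(fun ω => if W ω = w' then (1:ℝ) else 0)|sigmaAlg X] =ᵐ[P] (fun ω => p w' (X ω)))
    (hoverlap : ∀ w' : 𝕎, ∀ᵐ ω ∂P, 0 < p w' (X ω))
    (μ : 𝕎 → 𝒳 → ℝ) (hμm : ∀ w', Measurable (μ w'))
    (Cμ : ℝ) (hμbdd : ∀ w' x, |μ w' x| ≤ Cμ)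
    (hμc : ∀ w' : 𝕎, P[Ys w'|sigmaAlg X] =ᵐ[P] (fun ω => μ w' (X ω)))
    (Wfin : Finset 𝕎) (κ : 𝕎 → ℝ)
    (γ φ : 𝕎 → 𝒳 → ℝ) (hγm : ∀ w', Measurable (γ w')) (hφm : ∀ w', Measurable (φ w'))
    (Cγ : ℝ) (hγb : ∀ w' x, |γ w' x| ≤ Cγ) (Cφ : ℝ) (hφb : ∀ w' x, 0 < φ w' x ∧ φ w' x ≤ Cφ)
    (St : 𝒳 → ℝ) (hStm : Measurable St) (CSt : ℝ) (hStb : ∀ x, 0 < St x ∧ St x ≤ CSt)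
    (M : ℝ) (hMpos : 0 < M)
    (hSt : ∀ᵐ ω ∂P, St (X ω) ≤ M * ∏ w' ∈ Wfin, φ w' (X ω))
    (hDR : (∀ w' x, φ w' x = p w' x) ∨ (∀ w' x, γ w' x = μ w' x)) :
    P[(fun ω => St (X ω) * ((∑ w' ∈ Wfin, κ w' * (γ w' (X ω) + (if W ω = w' then (1:ℝ) else 0) * (Y ω - γ w' (X ω)) / φ w' (X ω))) - ∑ w' ∈ Wfin, κ w' * μ w' (X ω)))|sigmaAlg X] =ᵐ[P] 0 ∧
    ∃ C : ℝ, ∀ᵐ ω ∂P, (P[(fun ω' => (St (X ω') * ((∑ w' ∈ Wfin, κ w' * (γ w' (X ω') + (if W ω' = w' then (1:ℝ) else 0) * (Y ω' - γ w' (X ω')) / φ w' (X ω'))) - ∑ w' ∈ Wfin, κ w' * μ w' (X ω'))) ^ 2)|sigmaAlg X]) ω ≤ C := by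
  classical
  -- basic measurability on the sub-σ-algebra
  have hXm' : @Measurable Ω 𝒳 (sigmaAlg X) _ X := fun s hs => ⟨s, hs, rfl⟩
  have hint : ∀ (f : Ω → ℝ), Measurable f → ∀ C : ℝ, (∀ᵐ ω ∂P, |f ω| ≤ C) → Integrable f P :=
    fun f hf C hC => ⟨hf.aestronglyMeasurable,
      HasFiniteIntegral.of_bounded (C := C) (hC.mono fun ω hω => by
        simpa [Real.norm_eq_abs] using hω)⟩
  -- SUTVA consequences
  have hYeq : ∀ ω, Y ω = Ys (W ω) ω := by
    intro ω
    rw [hSUTVA ω]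
    rw [Finset.sum_congr rfl (fun w' _ => by rw [ite_mul, one_mul, zero_mul]),
      Finset.sum_ite_eq, if_pos (Finset.mem_univ _)]
  have hY : ∀ ω, |Y ω| ≤ CY := fun ω => by rw [hYeq ω]; exact hYbdd _ _
  have hindY : ∀ (w : 𝕎) ω, (if W ω = w then (1:ℝ) else 0) * Y ω
      = (if W ω = w then (1:ℝ) else 0) * Ys w ω := by
    intro w ω
    by_cases h : W ω = w
    · rw [hYeq ω, h]
    · simp [h]
  have hindm : ∀ w : 𝕎, Measurable (fun ω => if W ω = w then (1:ℝ) else 0) :=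
    fun w => Measurable.ite (hWm (measurableSet_singleton w)) measurable_const measurable_const
  have hindb : ∀ (w : 𝕎) ω, |if W ω = w then (1:ℝ) else 0| ≤ 1 := fun w ω => by
    by_cases h : W ω = w <;> simp [h]
  -- nonemptiness and nonnegativity of constants
  have hΩ : Nonempty Ω := by
    by_contra h
    have h1 : P Set.univ = 1 := measure_univ
    rw [Set.univ_eq_empty_iff.mpr (not_nonempty_iff.mp h)] at h1
    simp at h1
  obtain ⟨ω₀⟩ := hΩ
  have hCSt : 0 ≤ CSt := le_trans (hStb (X ω₀)).1.le (hStb (X ω₀)).2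
  -- the bound K on St/φ
  set K : ℝ := M * (max Cφ 1) ^ Wfin.card with hKdef
  have hK : 0 ≤ K := by positivity
  have hSφ : ∀ᵐ ω ∂P, ∀ w ∈ Wfin, St (X ω) / φ w (X ω) ≤ K := by
    filter_upwards [hSt] with ω hω
    intro w hw
    have hφpos : 0 < φ w (X ω) := (hφb w _).1
    rw [div_le_iff₀ hφpos]
    have h1 : ∏ w' ∈ Wfin.erase w, φ w' (X ω) ≤ (max Cφ 1) ^ Wfin.card := by
      calc ∏ w' ∈ Wfin.erase w, φ w' (X ω) ≤ ∏ _w' ∈ Wfin.erase w, max Cφ 1 :=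
            Finset.prod_le_prod (fun i _ => (hφb i _).1.le)
              (fun i _ => le_max_of_le_left (hφb i _).2)
        _ = (max Cφ 1) ^ (Wfin.erase w).card := by rw [Finset.prod_const]
        _ ≤ (max Cφ 1) ^ Wfin.card :=
            pow_le_pow_right₀ (le_max_right _ _) (Finset.card_le_card (Finset.erase_subset _ _))
    calc St (X ω) ≤ M * ∏ w' ∈ Wfin, φ w' (X ω) := hω
      _ = M * (∏ w' ∈ Wfin.erase w, φ w' (X ω)) * φ w (X ω) := by
          rw [← Finset.mul_prod_erase _ _ hw]; ring
      _ ≤ M * ((max Cφ 1) ^ Wfin.card) * φ w (X ω) := by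
          have := mul_le_mul_of_nonneg_left h1 hMpos.le
          exact mul_le_mul_of_nonneg_right this hφpos.le
      _ = K * φ w (X ω) := by rw [hKdef]
  -- nuisance components
  set e : 𝕎 → 𝒳 → ℝ := fun w x => St x * κ w / φ w x with hedef
  set fγ : 𝕎 → 𝒳 → ℝ := fun w x => -(St x * κ w * γ w x / φ w x) with hfγdef
  set aμ : 𝕎 → 𝒳 → ℝ := fun w x => κ w * St x * (γ w x - μ w x) with haμdef
  set G : 𝕎 → Ω → ℝ := fun w ω => e w (X ω) * ((if W ω = w then (1:ℝ) else 0) * Ys w ω)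
    + fγ w (X ω) * (if W ω = w then (1:ℝ) else 0) + aμ w (X ω) with hGdef
  -- pointwise decomposition of the residual
  have hPsiG : ∀ ω, St (X ω) * ((∑ w' ∈ Wfin, κ w' * (γ w' (X ω)
      + (if W ω = w' then (1:ℝ) else 0) * (Y ω - γ w' (X ω)) / φ w' (X ω)))
      - ∑ w' ∈ Wfin, κ w' * μ w' (X ω)) = ∑ w' ∈ Wfin, G w' ω := by
    intro ω
    rw [mul_sub, Finset.mul_sum, Finset.mul_sum, ← Finset.sum_sub_distrib]
    refine Finset.sum_congr rfl fun w _ => ?_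
    have hφ0 : φ w (X ω) ≠ 0 := ne_of_gt (hφb w _).1
    rw [hGdef]
    simp only [hedef, hfγdef, haμdef]
    set I : ℝ := (if W ω = w then (1:ℝ) else 0) with hIdef
    have h2 : I * (Y ω - γ w (X ω)) = I * Ys w ω - I * γ w (X ω) := by
      simp only [hIdef]
      rw [mul_sub, hindY w ω]
    rw [h2]
    field_simp
    ring
  -- measurability of components
  have hem : ∀ w : 𝕎, Measurable (e w) := fun w => (hStm.mul_const _).div (hφm w)
  have hfγmm : ∀ w : 𝕎, Measurable (fγ w) :=
    fun w => (((hStm.mul_const _).mul (hγm w)).div (hφm w)).neg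
  have haμm : ∀ w : 𝕎, Measurable (aμ w) :=
    fun w => (measurable_const.mul hStm).mul ((hγm w).sub (hμm w))
  have hGm : ∀ w : 𝕎, Measurable (G w) := fun w =>
    ((((hem w).comp hX).mul ((hindm w).mul (hYsm w))).add
      (((hfγmm w).comp hX).mul (hindm w))).add ((haμm w).comp hX)
  -- a.e. bounds for the components involving 1/φ
  have hSφ0 : ∀ (w : 𝕎) ω, 0 ≤ St (X ω) / φ w (X ω) :=
    fun w ω => div_nonneg (hStb _).1.le (hφb w _).1.le
  have heb : ∀ᵐ ω ∂P, ∀ w ∈ Wfin, |e w (X ω)| ≤ K * |κ w| := by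
    filter_upwards [hSφ] with ω hω
    intro w hw
    have h1 : e w (X ω) = St (X ω) / φ w (X ω) * κ w := by rw [hedef]; ring
    rw [h1, abs_mul, abs_of_nonneg (hSφ0 w ω)]
    exact mul_le_mul_of_nonneg_right (hω w hw) (abs_nonneg _)
  have hfγbb : ∀ᵐ ω ∂P, ∀ w ∈ Wfin, |fγ w (X ω)| ≤ K * |κ w| * Cγ := by
    filter_upwards [hSφ] with ω hω
    intro w hw
    have h1 : fγ w (X ω) = -(St (X ω) / φ w (X ω) * κ w * γ w (X ω)) := by rw [hfγdef]; ring
    rw [h1, abs_neg, abs_mul, abs_mul, abs_of_nonneg (hSφ0 w ω)]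
    have h2 : St (X ω) / φ w (X ω) * |κ w| ≤ K * |κ w| :=
      mul_le_mul_of_nonneg_right (hω w hw) (abs_nonneg _)
    exact mul_le_mul h2 (hγb w _) (abs_nonneg _) (by positivity)
  have hCγ0 : ∀ w : 𝕎, 0 ≤ Cγ := fun w => (abs_nonneg _).trans (hγb w (X ω₀))
  have hCμ0 : ∀ w : 𝕎, 0 ≤ Cμ := fun w => (abs_nonneg _).trans (hμbdd w (X ω₀))
  have hCY0 : ∀ _w : 𝕎, 0 ≤ CY := fun w => (abs_nonneg _).trans (hYbdd w ω₀)
  have haμb : ∀ (w : 𝕎) ω, |aμ w (X ω)| ≤ (|κ w| * CSt) * (Cγ + Cμ) := by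
    intro w ω
    rw [haμdef]
    refine abs_mul_le' ?_ ?_ (mul_nonneg (abs_nonneg _) hCSt)
    · rw [abs_mul]
      have h1 : |St (X ω)| ≤ CSt := by
        rw [abs_of_pos (hStb _).1]; exact (hStb _).2
      exact mul_le_mul_of_nonneg_left h1 (abs_nonneg _)
    · calc |γ w (X ω) - μ w (X ω)| ≤ |γ w (X ω)| + |μ w (X ω)| := abs_sub _ _
        _ ≤ Cγ + Cμ := add_le_add (hγb w _) (hμbdd w _)
  -- integrability of G
  set D : 𝕎 → ℝ := fun w => K * |κ w| * CY + K * |κ w| * Cγ + (|κ w| * CSt) * (Cγ + Cμ)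
    with hDdef
  have hGb : ∀ w ∈ Wfin, ∀ᵐ ω ∂P, |G w ω| ≤ D w := by
    intro w hw
    filter_upwards [heb, hfγbb] with ω h1 h2
    rw [hGdef]
    have t1 : |e w (X ω) * ((if W ω = w then (1:ℝ) else 0) * Ys w ω)| ≤ (K * |κ w|) * CY := by
      refine abs_mul_le' (h1 w hw) ?_ (by positivity)
      have := abs_mul_le' (hindb w ω) (hYbdd w ω) zero_le_one
      simpa using this
    have t2 : |fγ w (X ω) * (if W ω = w then (1:ℝ) else 0)| ≤ (K * |κ w| * Cγ) * 1 :=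
      abs_mul_le' (h2 w hw) (hindb w ω) (mul_nonneg (mul_nonneg hK (abs_nonneg _)) (hCγ0 w))
    have t3 := haμb w ω
    calc |e w (X ω) * ((if W ω = w then (1:ℝ) else 0) * Ys w ω)
          + fγ w (X ω) * (if W ω = w then (1:ℝ) else 0) + aμ w (X ω)|
        ≤ |e w (X ω) * ((if W ω = w then (1:ℝ) else 0) * Ys w ω)
          + fγ w (X ω) * (if W ω = w then (1:ℝ) else 0)| + |aμ w (X ω)| := abs_add_le _ _
      _ ≤ |e w (X ω) * ((if W ω = w then (1:ℝ) else 0) * Ys w ω)|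
          + |fγ w (X ω) * (if W ω = w then (1:ℝ) else 0)| + |aμ w (X ω)| := by
          have := abs_add_le (e w (X ω) * ((if W ω = w then (1:ℝ) else 0) * Ys w ω))
            (fγ w (X ω) * (if W ω = w then (1:ℝ) else 0))
          linarith
      _ ≤ D w := by rw [hDdef]; dsimp only; nlinarith [t1, t2, t3, abs_nonneg (κ w)]
  have hintG : ∀ w ∈ Wfin, Integrable (G w) P :=
    fun w hw => hint _ (hGm w) (D w) (hGb w hw)
  -- conditional expectation of each G w is zero
  have hGzero : ∀ w ∈ Wfin, P[G w|sigmaAlg X] =ᵐ[P] 0 := by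
    intro w hw
    set A : Ω → ℝ := fun ω => e w (X ω) * ((if W ω = w then (1:ℝ) else 0) * Ys w ω) with hAdef
    set B : Ω → ℝ := fun ω => fγ w (X ω) * (if W ω = w then (1:ℝ) else 0) with hBdef
    set Cc : Ω → ℝ := fun ω => aμ w (X ω) with hCcdef
    have hdecomp : G w = A + B + Cc := rfl
    have hintindYs : Integrable (fun ω => (if W ω = w then (1:ℝ) else 0) * Ys w ω) P := by
      refine hint _ ((hindm w).mul (hYsm w)) CY (ae_of_all _ fun ω => ?_)
      have := abs_mul_le' (hindb w ω) (hYbdd w ω) zero_le_one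
      simpa using this
    have hintind : Integrable (fun ω => if W ω = w then (1:ℝ) else 0) P :=
      hint _ (hindm w) 1 (ae_of_all _ (hindb w))
    have hintA : Integrable A P := by
      refine hint _ (((hem w).comp hX).mul ((hindm w).mul (hYsm w))) ((K * |κ w|) * CY) ?_
      filter_upwards [heb] with ω h1
      refine abs_mul_le' (h1 w hw) ?_ (by positivity)
      have := abs_mul_le' (hindb w ω) (hYbdd w ω) zero_le_one
      simpa using this
    have hintB : Integrable B P := by
      refine hint _ (((hfγmm w).comp hX).mul (hindm w)) ((K * |κ w| * Cγ) * 1) ?_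
      filter_upwards [hfγbb] with ω h2
      exact abs_mul_le' (h2 w hw) (hindb w ω) (mul_nonneg (mul_nonneg hK (abs_nonneg _)) (hCγ0 w))
    have hintC : Integrable Cc P :=
      hint _ ((haμm w).comp hX) ((|κ w| * CSt) * (Cγ + Cμ)) (ae_of_all _ (haμb w))
    have h_e_sm : StronglyMeasurable[sigmaAlg X] (fun ω => e w (X ω)) :=
      ((hem w).comp hXm').stronglyMeasurable
    have h_f_sm : StronglyMeasurable[sigmaAlg X] (fun ω => fγ w (X ω)) :=
      ((hfγmm w).comp hXm').stronglyMeasurable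
    have h_c_sm : StronglyMeasurable[sigmaAlg X] Cc :=
      ((haμm w).comp hXm').stronglyMeasurable
    -- key factorization
    have hkey := condexp_ind_mul_of_condIndep P X hX W hWm Ys hYsm CY hYbdd hUnconf w
    have hkey2 : P[(fun ω => (if W ω = w then (1:ℝ) else 0) * Ys w ω)|sigmaAlg X] =ᵐ[P]
        fun ω => p w (X ω) * μ w (X ω) := by
      refine hkey.trans ?_
      filter_upwards [hprop w, hμc w] with ω h1 h2
      rw [h1, h2]
    have h1 : P[G w|sigmaAlg X] =ᵐ[P] P[A + B|sigmaAlg X] + P[Cc|sigmaAlg X] := by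
      rw [hdecomp]
      exact condExp_add (hintA.add hintB) hintC _
    have h2 : P[A + B|sigmaAlg X] =ᵐ[P] P[A|sigmaAlg X] + P[B|sigmaAlg X] :=
      condExp_add hintA hintB _
    have h3 : P[A|sigmaAlg X] =ᵐ[P] fun ω => e w (X ω) * (p w (X ω) * μ w (X ω)) := by
      have hp := condExp_mul_of_stronglyMeasurable_left (μ := P) h_e_sm
        (f := fun ω => e w (X ω)) (g := fun ω => (if W ω = w then (1:ℝ) else 0) * Ys w ω)
        hintA hintindYs
      refine hp.trans ?_
      filter_upwards [hkey2] with ω hω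
      simp only [Pi.mul_apply]
      rw [hω]
    have h4 : P[B|sigmaAlg X] =ᵐ[P] fun ω => fγ w (X ω) * p w (X ω) := by
      have hp := condExp_mul_of_stronglyMeasurable_left (μ := P) h_f_sm
        (f := fun ω => fγ w (X ω)) (g := fun ω => if W ω = w then (1:ℝ) else 0)
        hintB hintind
      refine hp.trans ?_
      filter_upwards [hprop w] with ω hω
      simp only [Pi.mul_apply]
      rw [hω]
    have h5 : P[Cc|sigmaAlg X] = Cc := condExp_of_stronglyMeasurable hX.comap_le h_c_sm hintC
    -- pointwise vanishing
    have hpoint : ∀ x : 𝒳, e w x * (p w x * μ w x) + fγ w x * p w x + aμ w x = 0 := by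
      intro x
      rcases hDR with hDR | hDR
      · have hφ0 : φ w x ≠ 0 := ne_of_gt (hφb w x).1
        rw [← hDR w x]
        simp only [hedef, hfγdef, haμdef]
        field_simp
        ring
      · have hφ0 : φ w x ≠ 0 := ne_of_gt (hφb w x).1
        simp only [hedef, hfγdef, haμdef, hDR w x]
        field_simp
        ring
    filter_upwards [h1, h2, h3, h4] with ω e1 e2 e3 e4
    have : (P[G w|sigmaAlg X]) ω = e w (X ω) * (p w (X ω) * μ w (X ω))
        + fγ w (X ω) * p w (X ω) + aμ w (X ω) := by
      rw [e1, Pi.add_apply, e2, Pi.add_apply, e3, e4, h5]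
    rw [this, hpoint (X ω)]
    rfl
  -- assemble part 1
  constructor
  · have hΨeq : (fun ω => St (X ω) * ((∑ w' ∈ Wfin, κ w' * (γ w' (X ω)
        + (if W ω = w' then (1:ℝ) else 0) * (Y ω - γ w' (X ω)) / φ w' (X ω)))
        - ∑ w' ∈ Wfin, κ w' * μ w' (X ω))) = ∑ w' ∈ Wfin, G w' := by
      funext ω
      rw [hPsiG ω, Finset.sum_apply]
    rw [hΨeq]
    refine (condExp_finsetSum hintG _).trans ?_
    have hall := (eventually_all_finset Wfin).mpr hGzero
    filter_upwards [hall] with ω hω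
    simp only [Finset.sum_apply, Pi.zero_apply]
    exact Finset.sum_eq_zero fun w hw => by simpa using hω w hw
  -- part 2
  · refine ⟨(∑ w' ∈ Wfin, D w')^2, ?_⟩
    have hΨm : Measurable (fun ω => St (X ω) * ((∑ w' ∈ Wfin, κ w' * (γ w' (X ω)
        + (if W ω = w' then (1:ℝ) else 0) * (Y ω - γ w' (X ω)) / φ w' (X ω)))
        - ∑ w' ∈ Wfin, κ w' * μ w' (X ω))) := by
      have hYm : Measurable Y := by
        have hYdef : Y = fun ω => ∑ w' : 𝕎, (if W ω = w' then (1:ℝ) else 0) * Ys w' ω :=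
          funext hSUTVA
        rw [hYdef]
        exact Finset.measurable_sum _ fun w' _ => (hindm w').mul (hYsm w')
      refine (hStm.comp hX).mul (Measurable.sub ?_ ?_)
      · refine Finset.measurable_sum _ fun w' _ => ?_
        refine measurable_const.mul (Measurable.add ((hγm w').comp hX) ?_)
        exact ((hindm w').mul (hYm.sub ((hγm w').comp hX))).div ((hφm w').comp hX)
      · exact Finset.measurable_sum _ fun w' _ => measurable_const.mul ((hμm w').comp hX)
    have hD0 : ∀ w : 𝕎, 0 ≤ D w := by
      intro w
      rw [hDdef]
      have := hCY0 w
      have := hCγ0 w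
      have := hCμ0 w
      positivity
    have hbound : ∀ᵐ ω ∂P, (St (X ω) * ((∑ w' ∈ Wfin, κ w' * (γ w' (X ω)
        + (if W ω = w' then (1:ℝ) else 0) * (Y ω - γ w' (X ω)) / φ w' (X ω)))
        - ∑ w' ∈ Wfin, κ w' * μ w' (X ω)))^2 ≤ (∑ w' ∈ Wfin, D w')^2 := by
      filter_upwards [heb, hfγbb] with ω h1 h2
      have habs : |St (X ω) * ((∑ w' ∈ Wfin, κ w' * (γ w' (X ω)
          + (if W ω = w' then (1:ℝ) else 0) * (Y ω - γ w' (X ω)) / φ w' (X ω)))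
          - ∑ w' ∈ Wfin, κ w' * μ w' (X ω))| ≤ ∑ w' ∈ Wfin, D w' := by
        rw [hPsiG ω]
        refine (Finset.abs_sum_le_sum_abs _ _).trans (Finset.sum_le_sum fun w hw => ?_)
        rw [hGdef]
        have t1 : |e w (X ω) * ((if W ω = w then (1:ℝ) else 0) * Ys w ω)| ≤ (K * |κ w|) * CY := by
          refine abs_mul_le' (h1 w hw) ?_ (by positivity)
          have := abs_mul_le' (hindb w ω) (hYbdd w ω) zero_le_one
          simpa using this
        have t2 : |fγ w (X ω) * (if W ω = w then (1:ℝ) else 0)| ≤ (K * |κ w| * Cγ) * 1 :=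
          abs_mul_le' (h2 w hw) (hindb w ω) (mul_nonneg (mul_nonneg hK (abs_nonneg _)) (hCγ0 w))
        have t3 := haμb w ω
        calc |e w (X ω) * ((if W ω = w then (1:ℝ) else 0) * Ys w ω)
              + fγ w (X ω) * (if W ω = w then (1:ℝ) else 0) + aμ w (X ω)|
            ≤ |e w (X ω) * ((if W ω = w then (1:ℝ) else 0) * Ys w ω)
              + fγ w (X ω) * (if W ω = w then (1:ℝ) else 0)| + |aμ w (X ω)| := abs_add_le _ _
          _ ≤ |e w (X ω) * ((if W ω = w then (1:ℝ) else 0) * Ys w ω)|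
              + |fγ w (X ω) * (if W ω = w then (1:ℝ) else 0)| + |aμ w (X ω)| := by
              have := abs_add_le (e w (X ω) * ((if W ω = w then (1:ℝ) else 0) * Ys w ω))
                (fγ w (X ω) * (if W ω = w then (1:ℝ) else 0))
              linarith
          _ ≤ D w := by rw [hDdef]; dsimp only; nlinarith [t1, t2, t3, abs_nonneg (κ w)]
      calc (St (X ω) * ((∑ w' ∈ Wfin, κ w' * (γ w' (X ω)
          + (if W ω = w' then (1:ℝ) else 0) * (Y ω - γ w' (X ω)) / φ w' (X ω)))
          - ∑ w' ∈ Wfin, κ w' * μ w' (X ω)))^2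
          = |St (X ω) * ((∑ w' ∈ Wfin, κ w' * (γ w' (X ω)
          + (if W ω = w' then (1:ℝ) else 0) * (Y ω - γ w' (X ω)) / φ w' (X ω)))
          - ∑ w' ∈ Wfin, κ w' * μ w' (X ω))|^2 := (sq_abs _).symm
        _ ≤ (∑ w' ∈ Wfin, D w')^2 := by
            refine pow_le_pow_left₀ (abs_nonneg _) habs 2
    have hintΨsq : Integrable (fun ω' => (St (X ω') * ((∑ w' ∈ Wfin, κ w' * (γ w' (X ω')
        + (if W ω' = w' then (1:ℝ) else 0) * (Y ω' - γ w' (X ω')) / φ w' (X ω')))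
        - ∑ w' ∈ Wfin, κ w' * μ w' (X ω')))^2) P := by
      refine hint _ (hΨm.pow_const 2) ((∑ w' ∈ Wfin, D w')^2) ?_
      filter_upwards [hbound] with ω hω
      rw [abs_of_nonneg (sq_nonneg _)]
      exact hω
    have hmono := condExp_mono (μ := P) (m := sigmaAlg X) hintΨsq
      (integrable_const ((∑ w' ∈ Wfin, D w')^2)) hbound
    have hconst : P[(fun _ : Ω => (∑ w' ∈ Wfin, D w')^2)|sigmaAlg X]
        = fun _ => (∑ w' ∈ Wfin, D w')^2 := condExp_const hX.comap_le _
    rw [hconst] at hmono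
    filter_upwards [hmono] with ω hω
    exact hω
end

section
/- Within a single stratum of N ≥ 1 units, suppose the pairs (W_i, (Y*_{w,i})_{w∈𝕎}), i = 1,…,N, are mutually independent; each W_i is a 𝕎-valued treatment with P{W_i = w} = λ_w ∈ (0,1); each W_i is independent of the potential outcomes (Y*_{w,i})_{w∈𝕎}, which are integrable with E[Y*_{w,i}] = μ_w; and the observed outcome is Y_i = Y*_{W_i,i}. Fix w ∈ 𝕎 and define the leave-one-out shrinkage reciprocal R̂_i = N/(1 + Σ_{j≠i} 1{W_j = w}) and the estimator μ̃_w = (1/N)·Σ_{i=1}^N R̂_i·1{W_i = w}·Y_i. Then E[μ̃_w] − μ_w = −(1−λ_w)^N·μ_w. -/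
open MeasureTheory ProbabilityTheory Finset

lemma alg_aux (n : ℕ) (lam : ℝ) (h0 : 0 < lam) :
    ∑ k ∈ Finset.range (n+1), (n.choose k : ℝ) * lam^k * (1-lam)^(n-k) * (1/(1+(k:ℝ)))
      = (1-(1-lam)^(n+1))/(((n:ℝ)+1)*lam) := by
  have hne : ((n:ℝ)+1) * lam ≠ 0 := by positivity
  rw [eq_div_iff hne]
  have key : (∑ k ∈ Finset.range (n+1), (n.choose k : ℝ) * lam^k * (1-lam)^(n-k) * (1/(1+(k:ℝ)))) * (((n:ℝ)+1)*lam)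
      = ∑ k ∈ Finset.range (n+1), ((n+1).choose (k+1) : ℝ) * lam^(k+1) * (1-lam)^((n+1)-(k+1)) := by
    rw [Finset.sum_mul]
    apply Finset.sum_congr rfl
    intro k hk
    have hc : (((n+1).choose (k+1) : ℕ) : ℝ) * ((k:ℝ)+1) = ((n:ℝ)+1) * (n.choose k : ℝ) := by
      exact_mod_cast (Nat.add_one_mul_choose_eq n k).symm
    have hk1 : ((k:ℝ)+1) ≠ 0 := by positivity
    have hc' : (((n+1).choose (k+1) : ℕ) : ℝ) = ((n:ℝ)+1) * (n.choose k : ℝ) / ((k:ℝ)+1) := by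
      rw [eq_div_iff hk1]; exact hc
    have hexp : (n+1) - (k+1) = n - k := by omega
    rw [hexp, hc']
    field_simp
    ring
  rw [key]
  have shift : ∑ j ∈ Finset.range (n+2), ((n+1).choose j : ℝ) * lam^j * (1-lam)^((n+1)-j)
      = (∑ k ∈ Finset.range (n+1), ((n+1).choose (k+1) : ℝ) * lam^(k+1) * (1-lam)^((n+1)-(k+1))) + (1-lam)^(n+1) := by
    rw [Finset.sum_range_succ']
    simp
  have hbin : ∑ j ∈ Finset.range (n+2), ((n+1).choose j : ℝ) * lam^j * (1-lam)^((n+1)-j) = 1 := by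
    have := add_pow lam (1-lam) (n+1)
    simp only [add_sub_cancel, one_pow] at this
    conv_rhs => rw [this]
    apply Finset.sum_congr rfl
    intro j hj
    ring
  have := shift
  rw [hbin] at this
  linarith

lemma subset_sum {ι : Type*} [DecidableEq ι] (S : Finset ι) (lam : ℝ) (f : ℕ → ℝ) :
    ∑ T ∈ S.powerset, lam^T.card * (1-lam)^(S.card - T.card) * f T.card
      = ∑ k ∈ Finset.range (S.card+1), (S.card.choose k : ℝ) * lam^k * (1-lam)^(S.card-k) * f k := by
  rw [Finset.sum_powerset]
  apply Finset.sum_congr rfl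
  intro k hk
  have : ∀ T ∈ Finset.powersetCard k S, lam^T.card * (1-lam)^(S.card - T.card) * f T.card
      = lam^k * (1-lam)^(S.card - k) * f k := by
    intro T hT
    rw [(Finset.mem_powersetCard.1 hT).2]
  rw [Finset.sum_congr rfl this, Finset.sum_const, Finset.card_powersetCard, nsmul_eq_mul]
  ring

theorem stmt_15
    {Ω 𝕎 : Type*} [MeasurableSpace Ω] [Fintype 𝕎] [DecidableEq 𝕎]
    [MeasurableSpace 𝕎] [MeasurableSingletonClass 𝕎]
    (P : Measure Ω) [IsProbabilityMeasure P]
    (N : ℕ) (hN : 1 ≤ N)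
    (W : Fin N → Ω → 𝕎) (hWm : ∀ i, Measurable (W i))
    (Ys : 𝕎 → Fin N → Ω → ℝ) (hYsm : ∀ w' i, Measurable (Ys w' i))
    (hYsint : ∀ w' i, Integrable (Ys w' i) P)
    (hindep : iIndepFun (m := fun _ : Fin N => (inferInstance : MeasurableSpace (𝕎 × (𝕎 → ℝ))))
      (fun i => (fun ω => (W i ω, fun w' => Ys w' i ω))) P)
    (hWY : ∀ i, IndepFun (W i) (fun ω => (fun w' => Ys w' i ω)) P)
    (lam : 𝕎 → ℝ) (hlam : ∀ w', lam w' ∈ Set.Ioo (0:ℝ) 1)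
    (hlaw : ∀ i w', P {ω | W i ω = w'} = ENNReal.ofReal (lam w'))
    (muw : 𝕎 → ℝ) (hmu : ∀ w' i, ∫ ω, Ys w' i ω ∂P = muw w')
    (Y : Fin N → Ω → ℝ) (hY : ∀ i ω, Y i ω = Ys (W i ω) i ω)
    (w : 𝕎) :
    (∫ ω, (1 / (N : ℝ)) * ∑ i : Fin N, ((N : ℝ) / (1 + ∑ j ∈ Finset.univ.erase i, (if W j ω = w then (1:ℝ) else 0))) * (if W i ω = w then (1:ℝ) else 0) * Y i ω ∂P) - muw w = -(1 - lam w) ^ N * muw w := by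
  classical
  obtain ⟨hl0, hl1⟩ := hlam w
  set pf : Fin N → Ω → 𝕎 × (𝕎 → ℝ) := fun i ω => (W i ω, fun w' => Ys w' i ω) with hpf
  have hpm : ∀ i, Measurable (pf i) :=
    fun i => (hWm i).prodMk (measurable_pi_lambda _ fun w' => hYsm w' i)
  set S : Fin N → Finset (Fin N) := fun i => Finset.univ.erase i with hS
  set cnt : Fin N → Ω → ℝ := fun i ω => ∑ j ∈ S i, (if W j ω = w then (1:ℝ) else 0) with hcnt
  set g : Fin N → Ω → ℝ := fun i ω => (N:ℝ) / (1 + cnt i ω) with hg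
  set ind : Fin N → Ω → ℝ := fun i ω => if W i ω = w then (1:ℝ) else 0 with hind
  set F : Fin N → Ω → ℝ := fun i ω => ind i ω * Ys w i ω with hF
  -- basic measurability
  have hindm : ∀ i, Measurable (ind i) := by
    intro i
    exact (measurable_of_countable (fun x : 𝕎 => if x = w then (1:ℝ) else 0)).comp (hWm i)
  have hcntm : ∀ i, Measurable (cnt i) := by
    intro i
    exact Finset.measurable_sum _ fun j _ =>
      (measurable_of_countable (fun x : 𝕎 => if x = w then (1:ℝ) else 0)).comp (hWm j)
  have hcnt_nonneg : ∀ i ω, 0 ≤ cnt i ω := by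
    intro i ω
    exact Finset.sum_nonneg fun j _ => by positivity
  have hgm : ∀ i, Measurable (g i) := by
    intro i
    exact measurable_const.div ((measurable_const.add (hcntm i)))
  have hgbd : ∀ i ω, ‖g i ω‖ ≤ (N:ℝ) := by
    intro i ω
    have h1 : (0:ℝ) < 1 + cnt i ω := by linarith [hcnt_nonneg i ω]
    rw [Real.norm_eq_abs, abs_of_nonneg (by positivity)]
    rw [div_le_iff₀ h1]
    nlinarith [hcnt_nonneg i ω]
  have hFint : ∀ i, Integrable (F i) P := by
    intro i
    refine (hYsint w i).bdd_mul (c := 1) (hindm i).aestronglyMeasurable (ae_of_all _ fun ω => ?_)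
    simp only [hind]
    split <;> simp
  have hgFint : ∀ i, Integrable (fun ω => g i ω * F i ω) P := by
    intro i
    exact (hFint i).bdd_mul (hgm i).aestronglyMeasurable (ae_of_all _ fun ω => hgbd i ω)
  -- Step: rewrite integrand
  have hre : (∫ ω, (1 / (N : ℝ)) * ∑ i : Fin N, ((N : ℝ) / (1 + ∑ j ∈ Finset.univ.erase i, (if W j ω = w then (1:ℝ) else 0))) * (if W i ω = w then (1:ℝ) else 0) * Y i ω ∂P)
      = (1 / (N:ℝ)) * ∑ i : Fin N, ∫ ω, g i ω * F i ω ∂P := by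
    rw [← integral_finset_sum _ (fun i _ => hgFint i), ← integral_const_mul]
    apply integral_congr_ae
    filter_upwards with ω
    congr 1
    apply Finset.sum_congr rfl
    intro i _
    show (N:ℝ) / (1 + cnt i ω) * (ind i ω) * Y i ω = g i ω * F i ω
    simp only [hg, hF, hind, hY i ω]
    by_cases h : W i ω = w
    · simp [h]
    · simp [h]
  -- Step: independence factorization
  have hindint : ∀ i, Integrable (ind i) P := by
    intro i
    have := (integrable_const (μ := P) (1:ℝ)).bdd_mul (hindm i).aestronglyMeasurable
      (ae_of_all _ (fun ω => by simp only [hind]; split <;> simp) : ∀ᵐ ω ∂P, ‖ind i ω‖ ≤ (1:ℝ))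
    simpa [mul_one] using this
  have hgint : ∀ i, Integrable (g i) P := by
    intro i
    have := (integrable_const (μ := P) (1:ℝ)).bdd_mul (hgm i).aestronglyMeasurable
      (ae_of_all _ fun ω => hgbd i ω)
    simpa [mul_one] using this
  have hsplit : ∀ i, (∫ ω, g i ω * F i ω ∂P) = (∫ ω, g i ω ∂P) * (∫ ω, F i ω ∂P) := by
    intro i
    have hmem : i ∈ ({i} : Finset (Fin N)) := Finset.mem_singleton_self i
    have hd : Disjoint (S i) ({i} : Finset (Fin N)) := by
      simp [hS, Finset.disjoint_singleton_right]
    have hfin := hindep.indepFun_finset (S i) ({i} : Finset (Fin N)) hd hpm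
    set G1 : ((j : (S i : Finset (Fin N))) → 𝕎 × (𝕎 → ℝ)) → ℝ :=
      fun v => (N:ℝ) / (1 + ∑ j : (S i : Finset (Fin N)), (if (v j).1 = w then (1:ℝ) else 0)) with hG1
    set G2 : ((j : ({i} : Finset (Fin N))) → 𝕎 × (𝕎 → ℝ)) → ℝ :=
      fun v => (if (v ⟨i, hmem⟩).1 = w then (1:ℝ) else 0) * ((v ⟨i, hmem⟩).2 w) with hG2
    have hG1m : Measurable G1 := by
      apply Measurable.div measurable_const
      apply Measurable.add measurable_const
      apply Finset.measurable_sum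
      intro j _
      exact (measurable_of_countable (fun x : 𝕎 => if x = w then (1:ℝ) else 0)).comp
        (measurable_fst.comp (measurable_pi_apply j))
    have hG2m : Measurable G2 := by
      apply Measurable.mul
      · exact (measurable_of_countable (fun x : 𝕎 => if x = w then (1:ℝ) else 0)).comp
          (measurable_fst.comp (measurable_pi_apply _))
      · exact (measurable_pi_apply w).comp (measurable_snd.comp (measurable_pi_apply _))
    have hcomp := hfin.comp hG1m hG2m
    have he1 : (G1 ∘ fun ω (j : (S i : Finset (Fin N))) => pf j ω) = g i := by
      funext ω
      show (N:ℝ) / (1 + ∑ j : (S i : Finset (Fin N)), (if W (j:Fin N) ω = w then (1:ℝ) else 0)) = _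
      rw [Finset.sum_coe_sort (S i) (fun j => if W j ω = w then (1:ℝ) else 0)]
    have he2 : (G2 ∘ fun ω (j : ({i} : Finset (Fin N))) => pf j ω) = F i := rfl
    rw [he1, he2] at hcomp
    exact hcomp.integral_mul_eq_mul_integral (hgint i).aestronglyMeasurable (hFint i).aestronglyMeasurable
  -- Step: E[F i] = lam w * muw w
  have hEind : ∀ i, (∫ ω, ind i ω ∂P) = lam w := by
    intro i
    have hset : MeasurableSet {ω | W i ω = w} := hWm i (measurableSet_singleton w)
    have : ind i = Set.indicator {ω | W i ω = w} (fun _ => (1:ℝ)) := by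
      funext ω
      simp only [hind, Set.indicator_apply, Set.mem_setOf_eq]
    rw [this, MeasureTheory.integral_indicator_const (1:ℝ) hset, measureReal_def, hlaw i w, smul_eq_mul, mul_one,
      ENNReal.toReal_ofReal hl0.le]
  have hEF : ∀ i, (∫ ω, F i ω ∂P) = lam w * muw w := by
    intro i
    have hI : IndepFun (ind i) (Ys w i) P := by
      have := (hWY i).comp (measurable_of_countable (fun x : 𝕎 => if x = w then (1:ℝ) else 0))
        (measurable_pi_apply w)
      exact this
    have := hI.integral_mul_eq_mul_integral (hindint i).aestronglyMeasurable (hYsint w i).aestronglyMeasurable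
    calc (∫ ω, F i ω ∂P) = ∫ ω, (ind i * Ys w i) ω ∂P := rfl
    _ = (∫ ω, ind i ω ∂P) * ∫ ω, Ys w i ω ∂P := this
    _ = lam w * muw w := by rw [hEind i, hmu w i]
  -- Step: E[g i]
  have hBm : ∀ (T : Finset (Fin N)) (j : Fin N), MeasurableSet {ω | W j ω = w ↔ j ∈ T} := by
    intro T j
    by_cases h : j ∈ T
    · have : {ω | W j ω = w ↔ j ∈ T} = W j ⁻¹' {w} := by ext ω; simp [h]
      rw [this]; exact hWm j (measurableSet_singleton w)
    · have : {ω | W j ω = w ↔ j ∈ T} = (W j ⁻¹' {w})ᶜ := by ext ω; simp [h]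
      rw [this]; exact (hWm j (measurableSet_singleton w)).compl
  have hEg : ∀ i, (∫ ω, g i ω ∂P) = (1 - (1 - lam w)^N) / lam w := by
    intro i
    have hq0 : (0:ℝ) ≤ 1 - lam w := by linarith
    have hcard : (S i).card + 1 = N := by
      have : (S i).card = N - 1 := by
        simp [hS, Finset.card_erase_of_mem (Finset.mem_univ i)]
      omega
    have hAm : ∀ T : Finset (Fin N),
        MeasurableSet {ω | ∀ j ∈ S i, (W j ω = w ↔ j ∈ T)} := by
      intro T
      have : {ω | ∀ j ∈ S i, (W j ω = w ↔ j ∈ T)}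
          = ⋂ j, ⋂ (_ : j ∈ S i), {ω | W j ω = w ↔ j ∈ T} := by
        ext ω; simp
      rw [this]
      exact MeasurableSet.iInter fun j => MeasurableSet.iInter fun _ => hBm T j
    -- pointwise decomposition
    have hpt : ∀ ω, g i ω = ∑ T ∈ (S i).powerset,
        (if (∀ j ∈ S i, (W j ω = w ↔ j ∈ T)) then (1:ℝ) else 0) * ((N:ℝ)/(1+(T.card:ℝ))) := by
      intro ω
      set T₀ := (S i).filter (fun j => W j ω = w) with hT₀
      have hcnt0 : cnt i ω = (T₀.card : ℝ) := by
        simp only [hcnt, hT₀]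
        rw [Finset.sum_boole]
      rw [Finset.sum_eq_single T₀]
      · have hc : (∀ j ∈ S i, (W j ω = w ↔ j ∈ T₀)) := by
          intro j hj
          simp [hT₀, Finset.mem_filter, hj]
        rw [if_pos hc, one_mul]
        simp only [hg, hcnt0]
      · intro T hT hne
        rw [if_neg, zero_mul]
        intro hc
        apply hne
        ext j
        constructor
        · intro hj
          have hjS : j ∈ S i := (Finset.mem_powerset.1 hT) hj
          simp [hT₀, Finset.mem_filter, hjS, (hc j hjS).2 hj]
        · intro hj
          rw [hT₀, Finset.mem_filter] at hj
          exact (hc j hj.1).1 hj.2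
      · intro h
        exact absurd (Finset.mem_powerset.2 (Finset.filter_subset _ _)) h
    -- integrability of each term
    have hint : ∀ T : Finset (Fin N), Integrable (fun ω =>
        (if (∀ j ∈ S i, (W j ω = w ↔ j ∈ T)) then (1:ℝ) else 0) * ((N:ℝ)/(1+(T.card:ℝ)))) P := by
      intro T
      have hm : Measurable (fun ω =>
          (if (∀ j ∈ S i, (W j ω = w ↔ j ∈ T)) then (1:ℝ) else 0) * ((N:ℝ)/(1+(T.card:ℝ)))) :=
        (Measurable.ite (hAm T) measurable_const measurable_const).mul_const _
      have := (integrable_const (μ := P) (1:ℝ)).bdd_mul hm.aestronglyMeasurable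
        (c := (N:ℝ)/(1+(T.card:ℝ))) (ae_of_all _ fun ω => by
          rw [Real.norm_eq_abs]
          split_ifs with hcond
          · rw [one_mul, abs_of_nonneg (by positivity)]
          · rw [zero_mul, abs_zero]; positivity)
      simpa [mul_one] using this
    -- probability of each atom
    have hPA : ∀ T ∈ (S i).powerset, P {ω | ∀ j ∈ S i, (W j ω = w ↔ j ∈ T)}
        = ENNReal.ofReal ((lam w)^T.card * (1 - lam w)^((S i).card - T.card)) := by
      intro T hT
      have hTs : T ⊆ S i := Finset.mem_powerset.1 hT
      have hsetEq : {ω | ∀ j ∈ S i, (W j ω = w ↔ j ∈ T)}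
          = ⋂ j ∈ S i, {ω | W j ω = w ↔ j ∈ T} := by
        ext ω; simp
      rw [hsetEq]
      have hmeas : ∀ j ∈ S i, MeasurableSet[(inferInstance : MeasurableSpace (𝕎 × (𝕎 → ℝ))).comap (pf j)]
          {ω | W j ω = w ↔ j ∈ T} := by
        intro j _
        by_cases h : j ∈ T
        · refine ⟨Prod.fst ⁻¹' {w}, measurable_fst (measurableSet_singleton w), ?_⟩
          ext ω; simp [hpf, h]
        · refine ⟨(Prod.fst ⁻¹' {w})ᶜ, (measurable_fst (measurableSet_singleton w)).compl, ?_⟩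
          ext ω; simp [hpf, h]
      rw [hindep.meas_biInter hmeas]
      have hPj : ∀ j ∈ S i, P {ω | W j ω = w ↔ j ∈ T}
          = (if j ∈ T then ENNReal.ofReal (lam w) else ENNReal.ofReal (1 - lam w)) := by
        intro j _
        by_cases h : j ∈ T
        · rw [if_pos h]
          have : {ω | W j ω = w ↔ j ∈ T} = {ω | W j ω = w} := by ext ω; simp [h]
          rw [this, hlaw j w]
        · rw [if_neg h]
          have he : {ω | W j ω = w ↔ j ∈ T} = {ω | W j ω = w}ᶜ := by ext ω; simp [h]
          have hms : MeasurableSet {ω | W j ω = w} := hWm j (measurableSet_singleton w)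
          rw [he, measure_compl hms (measure_ne_top P _), measure_univ, hlaw j w,
            ENNReal.ofReal_sub 1 hl0.le, ENNReal.ofReal_one]
      rw [Finset.prod_congr rfl hPj, ← Finset.prod_sdiff hTs]
      have h1 : ∏ j ∈ T, (if j ∈ T then ENNReal.ofReal (lam w) else ENNReal.ofReal (1 - lam w))
          = ENNReal.ofReal (lam w) ^ T.card := by
        rw [Finset.prod_congr rfl (fun j hj => if_pos hj), Finset.prod_const]
      have h2 : ∏ j ∈ S i \ T, (if j ∈ T then ENNReal.ofReal (lam w) else ENNReal.ofReal (1 - lam w))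
          = ENNReal.ofReal (1 - lam w) ^ (S i \ T).card := by
        rw [Finset.prod_congr rfl (fun j hj => if_neg (Finset.mem_sdiff.1 hj).2), Finset.prod_const]
      rw [h1, h2, Finset.card_sdiff_of_subset hTs, ← ENNReal.ofReal_pow hl0.le,
        ← ENNReal.ofReal_pow hq0, ← ENNReal.ofReal_mul (by positivity)]
      rw [mul_comm]
    -- compute the integral
    have step1 : (∫ ω, g i ω ∂P) = ∑ T ∈ (S i).powerset, ∫ ω,
        (if (∀ j ∈ S i, (W j ω = w ↔ j ∈ T)) then (1:ℝ) else 0) * ((N:ℝ)/(1+(T.card:ℝ))) ∂P := by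
      rw [← integral_finset_sum _ (fun T _ => hint T)]
      exact integral_congr_ae (Filter.Eventually.of_forall hpt)
    have step2 : ∀ T ∈ (S i).powerset, (∫ ω,
        (if (∀ j ∈ S i, (W j ω = w ↔ j ∈ T)) then (1:ℝ) else 0) * ((N:ℝ)/(1+(T.card:ℝ))) ∂P)
        = (lam w)^T.card * (1 - lam w)^((S i).card - T.card) * ((N:ℝ)/(1+(T.card:ℝ))) := by
      intro T hT
      have hfun : (fun ω => (if (∀ j ∈ S i, (W j ω = w ↔ j ∈ T)) then (1:ℝ) else 0) * ((N:ℝ)/(1+(T.card:ℝ))))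
          = Set.indicator {ω | ∀ j ∈ S i, (W j ω = w ↔ j ∈ T)} (fun _ => (N:ℝ)/(1+(T.card:ℝ))) := by
        funext ω
        rw [Set.indicator_apply]
        simp only [Set.mem_setOf_eq]
        split_ifs <;> simp
      rw [hfun, MeasureTheory.integral_indicator_const _ (hAm T), measureReal_def, hPA T hT, smul_eq_mul,
        ENNReal.toReal_ofReal (by positivity)]
    rw [step1, Finset.sum_congr rfl step2]
    have := subset_sum (S i) (lam w) (fun k => (N:ℝ)/(1+(k:ℝ)))
    rw [this]
    have halg := alg_aux ((S i).card) (lam w) hl0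
    have hmulN : ∑ k ∈ Finset.range ((S i).card+1),
        ((S i).card.choose k : ℝ) * (lam w)^k * (1-lam w)^((S i).card-k) * ((N:ℝ)/(1+(k:ℝ)))
        = (N:ℝ) * ∑ k ∈ Finset.range ((S i).card+1),
        ((S i).card.choose k : ℝ) * (lam w)^k * (1-lam w)^((S i).card-k) * (1/(1+(k:ℝ))) := by
      rw [Finset.mul_sum]
      apply Finset.sum_congr rfl
      intro k _
      ring
    rw [hmulN, halg]
    have hNr : ((S i).card : ℝ) + 1 = (N:ℝ) := by exact_mod_cast congrArg (Nat.cast (R := ℝ)) hcard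
    rw [hNr, hcard]
    have hNne : (N:ℝ) ≠ 0 := by positivity
    field_simp
  rw [hre]
  have : ∀ i : Fin N, (∫ ω, g i ω * F i ω ∂P) = (1 - (1 - lam w)^N) * muw w := by
    intro i
    rw [hsplit i, hEF i, hEg i]
    field_simp
  rw [Finset.sum_congr rfl (fun i _ => this i), Finset.sum_const, Finset.card_univ,
    Fintype.card_fin, nsmul_eq_mul]
  have hNne : (N:ℝ) ≠ 0 := by positivity
  field_simp
  ring
end

section
/- In the single-stratum model of N ≥ 1 independent units with P{W_i = w} = λ_w ∈ (0,1), E[Y*_{w,i}] = μ_w ∈ [C̲_w, C̄_w], and Y_i = Y*_{W_i,i}: define μ̂_w(t) = μ̃_w + t·∏_{i=1}^N 1{W_i ≠ w}, where μ̃_w = (1/N)·Σ_{i=1}^N (N/(1 + Σ_{j≠i} 1{W_j = w}))·1{W_i = w}·Y_i. Then E[μ̂_w(μ_w)] = μ_w, and consequently E[μ̂_w(C̲_w)] ≤ μ_w ≤ E[μ̂_w(C̄_w)]; that is, the interval [μ̂_w(C̲_w), μ̂_w(C̄_w)] is an unbiased set-estimator of μ_w. -/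
open MeasureTheory ProbabilityTheory

theorem stmt_16
    {Ω 𝕎 : Type*} [MeasurableSpace Ω] [Fintype 𝕎] [DecidableEq 𝕎]
    [MeasurableSpace 𝕎] [MeasurableSingletonClass 𝕎]
    (P : Measure Ω) [IsProbabilityMeasure P]
    (N : ℕ) (hN : 1 ≤ N)
    (W : Fin N → Ω → 𝕎) (hWm : ∀ i, Measurable (W i))
    (Ys : 𝕎 → Fin N → Ω → ℝ) (hYsm : ∀ w' i, Measurable (Ys w' i))
    (hYsint : ∀ w' i, Integrable (Ys w' i) P)
    (hindep : iIndepFun (m := fun _ : Fin N => (inferInstance : MeasurableSpace (𝕎 × (𝕎 → ℝ))))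
      (fun i => (fun ω => (W i ω, fun w' => Ys w' i ω))) P)
    (hWY : ∀ i, IndepFun (W i) (fun ω => (fun w' => Ys w' i ω)) P)
    (lam : 𝕎 → ℝ) (hlam : ∀ w', lam w' ∈ Set.Ioo (0:ℝ) 1)
    (hlaw : ∀ i w', P {ω | W i ω = w'} = ENNReal.ofReal (lam w'))
    (muw : 𝕎 → ℝ) (hmu : ∀ w' i, ∫ ω, Ys w' i ω ∂P = muw w')
    (Y : Fin N → Ω → ℝ) (hY : ∀ i ω, Y i ω = Ys (W i ω) i ω)
    (w : 𝕎) (Cl Cu : ℝ) (hmuIcc : muw w ∈ Set.Icc Cl Cu) :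
    (∫ ω, ((1 / (N : ℝ)) * ∑ i : Fin N, ((N : ℝ) / (1 + ∑ j ∈ Finset.univ.erase i, (if W j ω = w then (1:ℝ) else 0))) * (if W i ω = w then (1:ℝ) else 0) * Y i ω) + muw w * ∏ i : Fin N, (if W i ω = w then (0:ℝ) else 1) ∂P) = muw w ∧
    (∫ ω, ((1 / (N : ℝ)) * ∑ i : Fin N, ((N : ℝ) / (1 + ∑ j ∈ Finset.univ.erase i, (if W j ω = w then (1:ℝ) else 0))) * (if W i ω = w then (1:ℝ) else 0) * Y i ω) + Cl * ∏ i : Fin N, (if W i ω = w then (0:ℝ) else 1) ∂P) ≤ muw w ∧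
    muw w ≤ (∫ ω, ((1 / (N : ℝ)) * ∑ i : Fin N, ((N : ℝ) / (1 + ∑ j ∈ Finset.univ.erase i, (if W j ω = w then (1:ℝ) else 0))) * (if W i ω = w then (1:ℝ) else 0) * Y i ω) + Cu * ∏ i : Fin N, (if W i ω = w then (0:ℝ) else 1) ∂P) := by
  classical
  obtain ⟨hCl, hCu⟩ := hmuIcc
  -- abbreviations
  set ind : Fin N → Ω → ℝ := fun i ω => if W i ω = w then (1:ℝ) else 0 with hind_def
  set g : Fin N → Ω → ℝ := fun i ω =>
    (N : ℝ) / (1 + ∑ j ∈ Finset.univ.erase i, ind j ω) with hg_def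
  set Pr : Ω → ℝ := fun ω => ∏ i : Fin N, (if W i ω = w then (0:ℝ) else 1) with hPr_def
  have hNpos : (0:ℝ) < N := by exact_mod_cast hN
  -- measurability of indicators
  have hindm : ∀ i, Measurable (ind i) := fun i =>
    Measurable.ite (hWm i (measurableSet_singleton w)) measurable_const measurable_const
  have hind01 : ∀ i ω, ind i ω = 0 ∨ ind i ω = 1 := by
    intro i ω; by_cases h : W i ω = w <;> simp [hind_def, h]
  have hind_nonneg : ∀ i ω, 0 ≤ ind i ω := by
    intro i ω; rcases hind01 i ω with h | h <;> simp [h]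
  have hgm : ∀ i, Measurable (g i) :=
    fun i => measurable_const.div
      (measurable_const.add (Finset.measurable_sum _ fun j _ => hindm j))
  have hden : ∀ i ω, (1:ℝ) ≤ 1 + ∑ j ∈ Finset.univ.erase i, ind j ω := by
    intro i ω
    have : (0:ℝ) ≤ ∑ j ∈ Finset.univ.erase i, ind j ω :=
      Finset.sum_nonneg fun j _ => hind_nonneg j ω
    linarith
  have hg_nonneg : ∀ i ω, 0 ≤ g i ω := by
    intro i ω
    exact div_nonneg hNpos.le (by linarith [hden i ω])
  have hg_le : ∀ i ω, g i ω ≤ N := by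
    intro i ω
    rw [hg_def]
    exact div_le_self hNpos.le (hden i ω)
  have hPrm : Measurable Pr :=
    Finset.measurable_prod _ fun i _ =>
      Measurable.ite (hWm i (measurableSet_singleton w)) measurable_const measurable_const
  have hPr01 : ∀ ω, Pr ω = 0 ∨ Pr ω = 1 := by
    intro ω
    by_cases h : ∃ i, W i ω = w
    · obtain ⟨i, hi⟩ := h
      left; exact Finset.prod_eq_zero (Finset.mem_univ i) (by simp [hi])
    · push_neg at h
      right; exact Finset.prod_eq_one fun i _ => by simp [h i]
  have hPr_nonneg : ∀ ω, 0 ≤ Pr ω := by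
    intro ω; rcases hPr01 ω with h | h <;> simp [h]
  -- integrability of basic pieces
  have hbd_int : ∀ (f : Ω → ℝ), Measurable f → ∀ C : ℝ, (∀ ω, ‖f ω‖ ≤ C) → Integrable f P := by
    intro f hf C hC
    exact (integrable_const C).mono' hf.aestronglyMeasurable (ae_of_all _ hC)
  have hind_int : ∀ i, Integrable (ind i) P := by
    intro i
    refine hbd_int _ (hindm i) 1 fun ω => ?_
    rcases hind01 i ω with h | h <;> simp [h]
  have hPr_int : Integrable Pr P := by
    refine hbd_int _ hPrm 1 fun ω => ?_
    rcases hPr01 ω with h | h <;> simp [h]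
  have hgind_int : ∀ i, Integrable (fun ω => g i ω * ind i ω) P := by
    intro i
    refine hbd_int _ ((hgm i).mul (hindm i)) N fun ω => ?_
    rw [Real.norm_eq_abs, abs_of_nonneg (mul_nonneg (hg_nonneg i ω) (hind_nonneg i ω))]
    calc g i ω * ind i ω ≤ (N:ℝ) * 1 := by
          refine mul_le_mul (hg_le i ω) ?_ (hind_nonneg i ω) hNpos.le
          rcases hind01 i ω with h | h <;> simp [h]
      _ = N := mul_one _
  have hindY_int : ∀ i, Integrable (fun ω => ind i ω * Ys w i ω) P := by
    intro i
    refine (hYsint w i).bdd_mul (hindm i).aestronglyMeasurable (c := 1) (ae_of_all _ fun ω => ?_)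
    rcases hind01 i ω with h | h <;> simp [h]
  have hgindY_int : ∀ i, Integrable (fun ω => g i ω * (ind i ω * Ys w i ω)) P := by
    intro i
    refine (hindY_int i).bdd_mul (hgm i).aestronglyMeasurable (c := N) (ae_of_all _ fun ω => ?_)
    rw [Real.norm_eq_abs, abs_of_nonneg (hg_nonneg i ω)]
    exact hg_le i ω
  -- value of ∫ ind i
  have hind_eval : ∀ i, ∫ ω, ind i ω ∂P = lam w := by
    intro i
    have heq : ind i = Set.indicator {ω | W i ω = w} (fun _ => (1:ℝ)) := by
      funext ω; by_cases h : W i ω = w <;> simp [hind_def, Set.indicator, h]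
    have hs : MeasurableSet {ω | W i ω = w} := hWm i (measurableSet_singleton w)
    rw [heq, integral_indicator_const (1:ℝ) hs, measureReal_def, hlaw i w,
      ENNReal.toReal_ofReal (hlam w).1.le, smul_eq_mul, mul_one]
  -- independence: ind i ⊥ Ys w i
  have hIndep3 : ∀ i, IndepFun (ind i) (Ys w i) P := by
    intro i
    exact IndepFun.comp (Ω := Ω) (hWY i)
      (Measurable.ite (measurableSet_singleton w) measurable_const measurable_const :
        Measurable fun x : 𝕎 => if x = w then (1:ℝ) else 0)
      (measurable_pi_apply w : Measurable fun f : 𝕎 → ℝ => f w)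
  have hmean1 : ∀ i, ∫ ω, ind i ω * Ys w i ω ∂P = lam w * muw w := by
    intro i
    have h : ∫ ω, ind i ω * Ys w i ω ∂P = (∫ ω, ind i ω ∂P) * ∫ ω, Ys w i ω ∂P :=
      (hIndep3 i).integral_fun_mul_eq_mul_integral (hind_int i).aestronglyMeasurable (hYsint w i).aestronglyMeasurable
    rw [h, hind_eval i, hmu w i]
  -- independence from iIndepFun: (stuff at i) ⊥ (g i)
  set X : Fin N → Ω → 𝕎 × (𝕎 → ℝ) := fun i ω => (W i ω, fun w' => Ys w' i ω) with hX_def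
  have hXm : ∀ i, Measurable (X i) := fun i =>
    (hWm i).prodMk (measurable_pi_lambda _ fun w' => hYsm w' i)
  have hbase : ∀ i : Fin N,
      IndepFun (fun ω => fun j : ({i} : Finset (Fin N)) => X j ω)
        (fun ω => fun j : (Finset.univ.erase i : Finset (Fin N)) => X j ω) P := by
    intro i
    refine hindep.indepFun_finset {i} (Finset.univ.erase i) ?_ hXm
    simp [Finset.disjoint_left]
  have hψm : ∀ i : Fin N, Measurable (fun q : ({j // j ∈ Finset.univ.erase i} → 𝕎 × (𝕎 → ℝ)) =>
      (N : ℝ) / (1 + ∑ j : {j // j ∈ Finset.univ.erase i}, if (q j).1 = w then (1:ℝ) else 0)) := by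
    intro i
    refine measurable_const.div (measurable_const.add (Finset.measurable_sum _ fun j _ => ?_))
    exact Measurable.ite (((measurable_pi_apply j).fst) (measurableSet_singleton w))
      measurable_const measurable_const
  have hψcomp : ∀ i : Fin N, ((fun q : ({j // j ∈ Finset.univ.erase i} → 𝕎 × (𝕎 → ℝ)) =>
      (N : ℝ) / (1 + ∑ j : {j // j ∈ Finset.univ.erase i}, if (q j).1 = w then (1:ℝ) else 0)) ∘
      (fun ω => fun j : (Finset.univ.erase i : Finset (Fin N)) => X j ω)) = g i := by
    intro i
    funext ω
    simp only [Function.comp_apply, hg_def]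
    congr 1
    congr 1
    exact Finset.sum_coe_sort (Finset.univ.erase i) (fun j => if W j ω = w then (1:ℝ) else 0)
  have hIndep1 : ∀ i, IndepFun (fun ω => ind i ω * Ys w i ω) (g i) P := by
    intro i
    have hφm : Measurable (fun p : (({i} : Finset (Fin N)) → 𝕎 × (𝕎 → ℝ)) =>
        (if (p ⟨i, Finset.mem_singleton_self i⟩).1 = w then (1:ℝ) else 0) *
          (p ⟨i, Finset.mem_singleton_self i⟩).2 w) := by
      refine Measurable.mul ?_ ?_
      · exact Measurable.ite (((measurable_pi_apply _).fst) (measurableSet_singleton w))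
          measurable_const measurable_const
      · exact (measurable_pi_apply w).comp (measurable_pi_apply _).snd
    have h := (hbase i).comp hφm (hψm i)
    rwa [hψcomp i] at h
  have hIndep2 : ∀ i, IndepFun (ind i) (g i) P := by
    intro i
    have hφm : Measurable (fun p : (({i} : Finset (Fin N)) → 𝕎 × (𝕎 → ℝ)) =>
        (if (p ⟨i, Finset.mem_singleton_self i⟩).1 = w then (1:ℝ) else 0)) :=
      Measurable.ite (((measurable_pi_apply _).fst) (measurableSet_singleton w))
        measurable_const measurable_const
    have h := (hbase i).comp hφm (hψm i)
    rwa [hψcomp i] at h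
  -- key per-unit identity
  have hkey_i : ∀ i, ∫ ω, g i ω * (ind i ω * Ys w i ω) ∂P
      = muw w * ∫ ω, g i ω * ind i ω ∂P := by
    intro i
    have h1 : ∫ ω, g i ω * (ind i ω * Ys w i ω) ∂P
        = (∫ ω, g i ω ∂P) * ∫ ω, ind i ω * Ys w i ω ∂P := ((hIndep1 i).symm).integral_fun_mul_eq_mul_integral
      (hbd_int _ (hgm i) N fun ω => by
        rw [Real.norm_eq_abs, abs_of_nonneg (hg_nonneg i ω)]; exact hg_le i ω).aestronglyMeasurable
      (hindY_int i).aestronglyMeasurable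
    have h2 : ∫ ω, g i ω * ind i ω ∂P
        = (∫ ω, g i ω ∂P) * ∫ ω, ind i ω ∂P := ((hIndep2 i).symm).integral_fun_mul_eq_mul_integral
      (hbd_int _ (hgm i) N fun ω => by
        rw [Real.norm_eq_abs, abs_of_nonneg (hg_nonneg i ω)]; exact hg_le i ω).aestronglyMeasurable
      (hind_int i).aestronglyMeasurable
    rw [h1, h2, hmean1 i, hind_eval i]
    ring
  -- pointwise sum identity
  have hsum : ∀ ω, ∑ i : Fin N, g i ω * ind i ω = (N:ℝ) * (1 - Pr ω) := by
    intro ω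
    by_cases hK : ∀ i, W i ω ≠ w
    · have h1 : ∀ i : Fin N, ind i ω = 0 := fun i => by simp [hind_def, hK i]
      have h2 : Pr ω = 1 := Finset.prod_eq_one fun i _ => by simp [hK i]
      simp [h1, h2]
    · push_neg at hK
      obtain ⟨i0, hi0⟩ := hK
      have hPr0 : Pr ω = 0 := Finset.prod_eq_zero (Finset.mem_univ i0) (by simp [hi0])
      set S : ℝ := ∑ i : Fin N, ind i ω with hS_def
      have hS1 : (1:ℝ) ≤ S := by
        have : ind i0 ω = 1 := by simp [hind_def, hi0]
        calc (1:ℝ) = ind i0 ω := this.symm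
          _ ≤ S := Finset.single_le_sum (fun j _ => hind_nonneg j ω) (Finset.mem_univ i0)
      have hSne : S ≠ 0 := by linarith
      have hterm : ∀ i : Fin N, g i ω * ind i ω = ((N:ℝ) / S) * ind i ω := by
        intro i
        by_cases h : W i ω = w
        · have hindi : ind i ω = 1 := by simp [hind_def, h]
          have hden_eq : 1 + ∑ j ∈ Finset.univ.erase i, ind j ω = S := by
            rw [hS_def, ← Finset.add_sum_erase Finset.univ (fun j => ind j ω) (Finset.mem_univ i),
              hindi]
          rw [hg_def]
          simp only []
          rw [hden_eq]
        · have hindi : ind i ω = 0 := by simp [hind_def, h]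
          simp [hindi]
      rw [Finset.sum_congr rfl fun i _ => hterm i, ← Finset.mul_sum, ← hS_def,
        div_mul_cancel₀ _ hSne, hPr0]
      ring
  -- the main integral formula
  have hA_int : Integrable (fun ω => (1 / (N:ℝ)) *
      ∑ i : Fin N, g i ω * (ind i ω * Ys w i ω)) P :=
    (integrable_finset_sum _ fun i _ => hgindY_int i).const_mul _
  have hrw : ∀ (t : ℝ) (ω : Ω),
      ((1 / (N : ℝ)) * ∑ i : Fin N, ((N : ℝ) / (1 + ∑ j ∈ Finset.univ.erase i,
        (if W j ω = w then (1:ℝ) else 0))) * (if W i ω = w then (1:ℝ) else 0) * Y i ω)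
        + t * ∏ i : Fin N, (if W i ω = w then (0:ℝ) else 1)
      = (1 / (N:ℝ)) * ∑ i : Fin N, g i ω * (ind i ω * Ys w i ω) + t * Pr ω := by
    intro t ω
    congr 1
    congr 1
    refine Finset.sum_congr rfl fun i _ => ?_
    by_cases h : W i ω = w
    · simp [hind_def, hg_def, hY i ω, h]
    · simp [hind_def, h]
  have hmain : ∀ t : ℝ,
      (∫ ω, ((1 / (N : ℝ)) * ∑ i : Fin N, ((N : ℝ) / (1 + ∑ j ∈ Finset.univ.erase i,
        (if W j ω = w then (1:ℝ) else 0))) * (if W i ω = w then (1:ℝ) else 0) * Y i ω)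
        + t * ∏ i : Fin N, (if W i ω = w then (0:ℝ) else 1) ∂P)
      = muw w + (t - muw w) * ∫ ω, Pr ω ∂P := by
    intro t
    have h0 : (∫ ω, ((1 / (N : ℝ)) * ∑ i : Fin N, ((N : ℝ) / (1 + ∑ j ∈ Finset.univ.erase i,
        (if W j ω = w then (1:ℝ) else 0))) * (if W i ω = w then (1:ℝ) else 0) * Y i ω)
        + t * ∏ i : Fin N, (if W i ω = w then (0:ℝ) else 1) ∂P)
        = ∫ ω, ((1 / (N:ℝ)) * ∑ i : Fin N, g i ω * (ind i ω * Ys w i ω) + t * Pr ω) ∂P :=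
      integral_congr_ae (ae_of_all _ fun ω => hrw t ω)
    rw [h0, integral_add hA_int (hPr_int.const_mul t), integral_const_mul,
      integral_const_mul, integral_finset_sum _ fun i _ => hgindY_int i]
    have hsum_int : ∑ i : Fin N, ∫ ω, g i ω * (ind i ω * Ys w i ω) ∂P
        = muw w * ((N:ℝ) * (1 - ∫ ω, Pr ω ∂P)) := by
      rw [Finset.sum_congr rfl fun i _ => hkey_i i, ← Finset.mul_sum,
        ← integral_finset_sum _ fun i _ => hgind_int i]
      have : ∫ ω, (∑ i : Fin N, g i ω * ind i ω) ∂P = (N:ℝ) * (1 - ∫ ω, Pr ω ∂P) := by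
        rw [integral_congr_ae (ae_of_all _ fun ω => hsum ω), integral_const_mul,
          integral_sub (integrable_const 1) hPr_int]
        simp [measure_univ]
      rw [this]
    rw [hsum_int]
    field_simp
    ring
  have hp_nonneg : 0 ≤ ∫ ω, Pr ω ∂P := integral_nonneg fun ω => hPr_nonneg ω
  refine ⟨?_, ?_, ?_⟩
  · rw [hmain (muw w)]; ring
  · rw [hmain Cl]
    nlinarith [mul_nonneg (sub_nonneg.2 hCl) hp_nonneg]
  · rw [hmain Cu]
    nlinarith [mul_nonneg (sub_nonneg.2 hCu) hp_nonneg]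
end

section
/- In the stratified model with strata 𝕏_n, each stratum k having N_k ≥ 2 units, all units mutually independent, P{W_i = w} = λ_{w,X_i} ∈ (0,1), E[Y*_{w,i}] = μ_w, and Y_i = Y*_{W_i,i}: fix distinct treatments a, b ∈ 𝕎 and define the leave-one-out propensity estimates P̂_{w,i} = (Σ_{j≠i: X_j = X_i} 1{W_j = w})/(N_{X_i} − 1) and the statistic T̂_{a,b} = (1/n)·Σ_{i=1}^n [P̂_{b,i}·1{W_i = a} − P̂_{a,i}·1{W_i = b}]·Y_i. Then E[T̂_{a,b}] = 𝒢_{a,b}·(μ_a − μ_b), where 𝒢_{a,b} = (1/n)·Σ_{i=1}^n λ_{a,X_i}·λ_{b,X_i}; equivalently, the residual Ψ̂_{a,b} = 𝒢_{a,b}·(μ_a − μ_b) − T̂_{a,b} satisfies E[Ψ̂_{a,b}] = 0. -/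
open MeasureTheory ProbabilityTheory Finset

/-- The set of units belonging to stratum `k`. -/
def stratum {n K : ℕ} (Xs : Fin n → Fin K) (k : Fin K) : Finset (Fin n) :=
  Finset.univ.filter (fun i => Xs i = k)

/-- The number of units in stratum `k`. -/
def Nstr {n K : ℕ} (Xs : Fin n → Fin K) (k : Fin K) : ℕ := (stratum Xs k).card

/-- Leave-one-out shrinkage estimator of the reciprocal of the propensity score. -/
noncomputable def Rhat {Ω 𝕎 : Type*} [DecidableEq 𝕎] {n K : ℕ} (Xs : Fin n → Fin K)
    (W : Fin n → Ω → 𝕎) (w : 𝕎) (i : Fin n) (ω : Ω) : ℝ :=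
  (Nstr Xs (Xs i) : ℝ) /
    (1 + ∑ j ∈ (stratum Xs (Xs i)).erase i, (if W j ω = w then (1:ℝ) else 0))

/-- Leave-one-out estimator of the propensity score. -/
noncomputable def Phat {Ω 𝕎 : Type*} [DecidableEq 𝕎] {n K : ℕ} (Xs : Fin n → Fin K)
    (W : Fin n → Ω → 𝕎) (w : 𝕎) (i : Fin n) (ω : Ω) : ℝ :=
  (∑ j ∈ (stratum Xs (Xs i)).erase i, (if W j ω = w then (1:ℝ) else 0)) /
    ((Nstr Xs (Xs i) : ℝ) - 1)

/-- The statistic `T̂_{a,b}`. -/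
noncomputable def Tstat {Ω 𝕎 : Type*} [DecidableEq 𝕎] {n K : ℕ} (Xs : Fin n → Fin K)
    (W : Fin n → Ω → 𝕎) (Y : Fin n → Ω → ℝ) (a b : 𝕎) (ω : Ω) : ℝ :=
  (1 / (n : ℝ)) * ∑ i : Fin n,
    (Phat Xs W b i ω * (if W i ω = a then (1:ℝ) else 0)
      - Phat Xs W a i ω * (if W i ω = b then (1:ℝ) else 0)) * Y i ω

theorem stmt_18
    {Ω 𝕎 : Type*} [MeasurableSpace Ω] [Fintype 𝕎] [DecidableEq 𝕎]
    [MeasurableSpace 𝕎] [MeasurableSingletonClass 𝕎]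
    (P : Measure Ω) [IsProbabilityMeasure P]
    (n K : ℕ) (hK : 1 < K) (Xs : Fin n → Fin K)
    (hNk : ∀ k : Fin K, 2 ≤ Nstr Xs k)
    (W : Fin n → Ω → 𝕎) (hWm : ∀ i, Measurable (W i))
    (Ys : 𝕎 → Fin n → Ω → ℝ) (hYsm : ∀ w' i, Measurable (Ys w' i))
    (hYsint : ∀ w' i, Integrable (Ys w' i) P)
    (hindep : iIndepFun
      (fun i => (fun ω => (W i ω, fun w' => Ys w' i ω))) P)
    (hWY : ∀ i, IndepFun (W i) (fun ω => (fun w' => Ys w' i ω)) P)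
    (lam : 𝕎 → Fin K → ℝ) (hlam : ∀ w' k, lam w' k ∈ Set.Ioo (0:ℝ) 1)
    (hlaw : ∀ i w', P {ω | W i ω = w'} = ENNReal.ofReal (lam w' (Xs i)))
    (muw : 𝕎 → ℝ) (hmu : ∀ w' i, ∫ ω, Ys w' i ω ∂P = muw w')
    (Y : Fin n → Ω → ℝ) (hY : ∀ i ω, Y i ω = Ys (W i ω) i ω)
    (a b : 𝕎) (hab : a ≠ b) :
    (∫ ω, Tstat Xs W Y a b ω ∂P)
      = ((1 / (n : ℝ)) * ∑ i : Fin n, lam a (Xs i) * lam b (Xs i)) * (muw a - muw b) ∧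
    (∫ ω, (((1 / (n : ℝ)) * ∑ i : Fin n, lam a (Xs i) * lam b (Xs i)) * (muw a - muw b)
        - Tstat Xs W Y a b ω) ∂P) = 0 := by
  -- abbreviations
  classical
  set Ia : 𝕎 → Fin n → Ω → ℝ := fun w i ω => if W i ω = w then (1:ℝ) else 0 with hIa
  -- measurability of indicators
  have hindm : ∀ (i : Fin n) (w' : 𝕎), Measurable (Ia w' i) := by
    intro i w'
    exact Measurable.ite (hWm i (measurableSet_singleton w')) measurable_const measurable_const
  have hindint : ∀ (i : Fin n) (w' : 𝕎), Integrable (Ia w' i) P := by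
    intro i w'
    refine Integrable.mono' (integrable_const (1:ℝ)) (hindm i w').aestronglyMeasurable ?_
    filter_upwards with ω
    simp only [hIa]
    split <;> simp
  have hindi : ∀ (i : Fin n) (w' : 𝕎), ∫ ω, Ia w' i ω ∂P = lam w' (Xs i) := by
    intro i w'
    have h1 : Ia w' i = Set.indicator {ω | W i ω = w'} (fun _ => (1:ℝ)) := by
      funext ω
      simp only [hIa, Set.indicator_apply, Set.mem_setOf_eq]
    rw [h1, integral_indicator_const (1:ℝ)
      (show MeasurableSet {ω | W i ω = w'} from hWm i (measurableSet_singleton w')), measureReal_def, hlaw i w']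
    simp [ENNReal.toReal_ofReal (hlam w' (Xs i)).1.le]
  -- step 1
  have h1 : ∀ (i : Fin n) (w' : 𝕎),
      IndepFun (Ia w' i) (Ys w' i) P := by
    intro i w'
    have hφ : Measurable (fun x : 𝕎 => if x = w' then (1:ℝ) else 0) :=
      Measurable.ite (measurableSet_singleton w') measurable_const measurable_const
    exact (hWY i).comp hφ (measurable_pi_apply w')
  have h1int : ∀ (i : Fin n) (w' : 𝕎),
      Integrable (fun ω => Ia w' i ω * Ys w' i ω) P := by
    intro i w'
    exact (h1 i w').integrable_mul (hindint i w') (hYsint w' i)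
  have h1val : ∀ (i : Fin n) (w' : 𝕎),
      ∫ ω, Ia w' i ω * Ys w' i ω ∂P = lam w' (Xs i) * muw w' := by
    intro i w'
    have := (h1 i w').integral_mul_eq_mul_integral (hindint i w').aestronglyMeasurable
      (hYsint w' i).aestronglyMeasurable
    simpa [hindi i w', hmu w' i] using this
  -- step 2: pairs
  have h2indep : ∀ (i j : Fin n), j ≠ i → ∀ (w1 w2 : 𝕎),
      IndepFun (Ia w1 j) (fun ω => Ia w2 i ω * Ys w2 i ω) P := by
    intro i j hji w1 w2
    have hψ : Measurable (fun p : 𝕎 × (𝕎 → ℝ) => if p.1 = w1 then (1:ℝ) else 0) :=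
      Measurable.ite (measurable_fst (measurableSet_singleton w1)) measurable_const
        measurable_const
    have hφ : Measurable (fun p : 𝕎 × (𝕎 → ℝ) => (if p.1 = w2 then (1:ℝ) else 0) * p.2 w2) :=
      (Measurable.ite (measurable_fst (measurableSet_singleton w2)) measurable_const
        measurable_const).mul ((measurable_pi_apply w2).comp measurable_snd)
    exact (hindep.indepFun hji).comp hψ hφ
  have h2int : ∀ (i j : Fin n), j ≠ i → ∀ (w1 w2 : 𝕎),
      Integrable (fun ω => Ia w1 j ω * (Ia w2 i ω * Ys w2 i ω)) P := by
    intro i j hji w1 w2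
    exact (h2indep i j hji w1 w2).integrable_mul (hindint j w1) (h1int i w2)
  have h2val : ∀ (i j : Fin n), j ≠ i → ∀ (w1 w2 : 𝕎),
      ∫ ω, Ia w1 j ω * (Ia w2 i ω * Ys w2 i ω) ∂P
        = lam w1 (Xs j) * (lam w2 (Xs i) * muw w2) := by
    intro i j hji w1 w2
    have := (h2indep i j hji w1 w2).integral_mul_eq_mul_integral (hindint j w1).aestronglyMeasurable
      (h1int i w2).aestronglyMeasurable
    simpa [hindi j w1, h1val i w2] using this
  -- the decomposition of Tstat
  set g : Fin n → Ω → ℝ := fun i ω =>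
    (1 / ((Nstr Xs (Xs i) : ℝ) - 1)) * ∑ j ∈ (stratum Xs (Xs i)).erase i,
      (Ia b j ω * (Ia a i ω * Ys a i ω) - Ia a j ω * (Ia b i ω * Ys b i ω)) with hg
  have hYind : ∀ (i : Fin n) (w' : 𝕎) (ω : Ω), Ia w' i ω * Y i ω = Ia w' i ω * Ys w' i ω := by
    intro i w' ω
    by_cases h : W i ω = w'
    · simp [hIa, h, hY i ω]
    · simp [hIa, h]
  have hTg : ∀ ω, Tstat Xs W Y a b ω = (1 / (n:ℝ)) * ∑ i : Fin n, g i ω := by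
    intro ω
    unfold Tstat Phat
    congr 1
    refine Finset.sum_congr rfl ?_
    intro i _
    have ha := hYind i a ω
    have hb := hYind i b ω
    simp only [hIa] at ha hb
    simp only [hg, hIa, Finset.sum_sub_distrib, ← Finset.sum_mul]
    linear_combination
      ((∑ j ∈ (stratum Xs (Xs i)).erase i, if W j ω = b then (1:ℝ) else 0) /
        ((Nstr Xs (Xs i) : ℝ) - 1)) * ha -
      ((∑ j ∈ (stratum Xs (Xs i)).erase i, if W j ω = a then (1:ℝ) else 0) /
        ((Nstr Xs (Xs i) : ℝ) - 1)) * hb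
  have hmem : ∀ i : Fin n, i ∈ stratum Xs (Xs i) := by
    intro i; simp [stratum]
  have hXsj : ∀ (i j : Fin n), j ∈ (stratum Xs (Xs i)).erase i → Xs j = Xs i := by
    intro i j hj
    have := Finset.mem_of_mem_erase hj
    simpa [stratum] using this
  have hgint : ∀ i : Fin n, Integrable (g i) P := by
    intro i
    refine Integrable.const_mul ?_ _
    refine integrable_finset_sum _ ?_
    intro j hj
    have hji : j ≠ i := Finset.ne_of_mem_erase hj
    exact (h2int i j hji b a).sub (h2int i j hji a b)
  have hNk1 : ∀ i : Fin n, ((Nstr Xs (Xs i) : ℝ) - 1) ≠ 0 := by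
    intro i
    have h2 := hNk (Xs i)
    have : (2:ℝ) ≤ (Nstr Xs (Xs i) : ℝ) := by exact_mod_cast h2
    linarith
  have hgval : ∀ i : Fin n,
      ∫ ω, g i ω ∂P = lam a (Xs i) * lam b (Xs i) * (muw a - muw b) := by
    intro i
    have hcard : ((stratum Xs (Xs i)).erase i).card = Nstr Xs (Xs i) - 1 := by
      rw [Finset.card_erase_of_mem (hmem i)]; rfl
    rw [hg]
    simp only
    rw [integral_const_mul]
    have hsint : ∀ j ∈ (stratum Xs (Xs i)).erase i,
        Integrable (fun ω => Ia b j ω * (Ia a i ω * Ys a i ω)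
          - Ia a j ω * (Ia b i ω * Ys b i ω)) P := fun j hj =>
      (h2int i j (Finset.ne_of_mem_erase hj) b a).sub
        (h2int i j (Finset.ne_of_mem_erase hj) a b)
    rw [integral_finset_sum _ hsint]
    have hterm : ∀ j ∈ (stratum Xs (Xs i)).erase i,
        (∫ ω, (Ia b j ω * (Ia a i ω * Ys a i ω) - Ia a j ω * (Ia b i ω * Ys b i ω)) ∂P)
        = lam a (Xs i) * lam b (Xs i) * (muw a - muw b) := by
      intro j hj
      have hji : j ≠ i := Finset.ne_of_mem_erase hj
      rw [integral_sub (h2int i j hji b a) (h2int i j hji a b), h2val i j hji b a,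
        h2val i j hji a b, hXsj i j hj]
      ring
    rw [Finset.sum_congr rfl hterm, Finset.sum_const, hcard, nsmul_eq_mul]
    have hc : ((Nstr Xs (Xs i) - 1 : ℕ) : ℝ) = (Nstr Xs (Xs i) : ℝ) - 1 := by
      have := hNk (Xs i)
      push_cast [Nat.cast_sub (by omega : 1 ≤ Nstr Xs (Xs i))]
      ring
    rw [hc]
    field_simp
    rw [div_eq_iff (hNk1 i)]; ring
  have hTint : Integrable (Tstat Xs W Y a b) P := by
    have : Tstat Xs W Y a b = fun ω => (1 / (n:ℝ)) * ∑ i : Fin n, g i ω := funext hTg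
    rw [this]
    exact ((integrable_finset_sum _ (fun i _ => hgint i)).const_mul _)
  have hTval : ∫ ω, Tstat Xs W Y a b ω ∂P
      = ((1 / (n : ℝ)) * ∑ i : Fin n, lam a (Xs i) * lam b (Xs i)) * (muw a - muw b) := by
    calc ∫ ω, Tstat Xs W Y a b ω ∂P
        = ∫ ω, (1 / (n:ℝ)) * ∑ i : Fin n, g i ω ∂P := by
          exact integral_congr_ae (Filter.Eventually.of_forall hTg)
      _ = (1 / (n:ℝ)) * ∑ i : Fin n, ∫ ω, g i ω ∂P := by
          rw [integral_const_mul, integral_finset_sum _ (fun i _ => hgint i)]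
      _ = (1 / (n:ℝ)) * ∑ i : Fin n, lam a (Xs i) * lam b (Xs i) * (muw a - muw b) := by
          rw [Finset.sum_congr rfl (fun i _ => hgval i)]
      _ = ((1 / (n : ℝ)) * ∑ i : Fin n, lam a (Xs i) * lam b (Xs i)) * (muw a - muw b) := by
          rw [← Finset.sum_mul]; ring
  refine ⟨hTval, ?_⟩
  rw [integral_sub (integrable_const _) hTint, integral_const, hTval]
  simp
end

section
/- In the design-based binary-treatment setting with fixed data, suppose the weak null hypothesis holds with hypothesized effect T̄ ∈ ℝ and bounded heterogeneity: Y*_{1,i} = Y*_{0,i} + T̄ + ε_i with |ε_i| ≤ c₁ for every unit i. Let W̃ = (W̃_1,…,W̃_n) be a random re-draw of {0,1}-valued treatments, Ỹ_i = Y_i + (T̄ + ε_i)(W̃_i − W_i) the corresponding observed outcomes, and T̃ = (1/n)·Σ_{i=1}^n Q_i(W̃)·Ỹ_i a linear test statistic with weights Q_i depending on (X_j, W̃_j)_{j=1}^n. Define Ω₁ = (1/n)·Σ_i Q_i(W̃)·Y_i, U_i = (1/n)·Q_i(W̃)·(W̃_i − W_i), Ω₂ = Σ_i U_i, Ω₃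 = Σ_i 1{U_i ≥ 0}·U_i, and Ω₄ = Σ_i 1{U_i < 0}·U_i. Then, pointwise, T̃ = Ω₁ + Ω₂·T̄ + Σ_i ε_i·U_i, and Ω₁ + Ω₂·T̄ − c₁·Ω₃ + c₁·Ω₄ ≤ T̃ ≤ Ω₁ + Ω₂·T̄ + c₁·Ω₃ − c₁·Ω₄; consequently, for any threshold T̂ ∈ ℝ, the p-value P{T̃ ≥ T̂} satisfies P{Ω₁ + Ω₂·T̄ − c₁·Ω₃ + c₁·Ω₄ ≥ T̂} ≤ P{T̃ ≥ T̂} ≤ P{Ω₁ + Ω₂·T̄ + c₁·Ω₃ − c₁·Ω₄ ≥ T̂}, i.e., it is bounded by the extrema of {P{Ω₁ + Ω₂·T̄ + ε₃·Ω₃ + ε₄·Ω₄ ≥ T̂} : (ε₃, ε₄) ∈ {−c₁, c₁}²}. -/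
open MeasureTheory

/-- Real value of a Boolean treatment indicator. -/
def bval (x : Bool) : ℝ := if x then 1 else 0

/-- Observed outcome under a re-drawn treatment vector `v`. -/
noncomputable def Ytil {n : ℕ} (Y : Fin n → ℝ) (Tbar : ℝ) (ε : Fin n → ℝ)
    (W : Fin n → Bool) (v : Fin n → Bool) (i : Fin n) : ℝ :=
  Y i + (Tbar + ε i) * (bval (v i) - bval (W i))

/-- The linear test statistic `T̃` evaluated at the re-drawn treatment vector `v`. -/
noncomputable def Ttil {n : ℕ} (Q : Fin n → (Fin n → Bool) → ℝ) (Y : Fin n → ℝ) (Tbar : ℝ)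
    (ε : Fin n → ℝ) (W : Fin n → Bool) (v : Fin n → Bool) : ℝ :=
  (1 / (n : ℝ)) * ∑ i : Fin n, Q i v * Ytil Y Tbar ε W v i

/-- `Ω₁`. -/
noncomputable def Omega1 {n : ℕ} (Q : Fin n → (Fin n → Bool) → ℝ) (Y : Fin n → ℝ)
    (v : Fin n → Bool) : ℝ :=
  (1 / (n : ℝ)) * ∑ i : Fin n, Q i v * Y i

/-- `U_i`. -/
noncomputable def Uval {n : ℕ} (Q : Fin n → (Fin n → Bool) → ℝ) (W : Fin n → Bool)
    (v : Fin n → Bool) (i : Fin n) : ℝ :=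
  (1 / (n : ℝ)) * Q i v * (bval (v i) - bval (W i))

/-- `Ω₂`. -/
noncomputable def Omega2 {n : ℕ} (Q : Fin n → (Fin n → Bool) → ℝ) (W : Fin n → Bool)
    (v : Fin n → Bool) : ℝ :=
  ∑ i : Fin n, Uval Q W v i

/-- `Ω₃`. -/
noncomputable def Omega3 {n : ℕ} (Q : Fin n → (Fin n → Bool) → ℝ) (W : Fin n → Bool)
    (v : Fin n → Bool) : ℝ :=
  ∑ i : Fin n, if 0 ≤ Uval Q W v i then Uval Q W v i else 0

/-- `Ω₄`. -/
noncomputable def Omega4 {n : ℕ} (Q : Fin n → (Fin n → Bool) → ℝ) (W : Fin n → Bool)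
    (v : Fin n → Bool) : ℝ :=
  ∑ i : Fin n, if Uval Q W v i < 0 then Uval Q W v i else 0

theorem stmt_19 {Ω : Type*} [MeasurableSpace Ω] (P : Measure Ω) [IsProbabilityMeasure P]
    (n : ℕ) (hn : 0 < n)
    (Ys0 Ys1 : Fin n → ℝ) (W : Fin n → Bool)
    (Y : Fin n → ℝ) (hY : ∀ i, Y i = if W i then Ys1 i else Ys0 i)
    (Tbar c1 : ℝ) (hc1 : 0 ≤ c1) (ε : Fin n → ℝ)
    (hnull : ∀ i, Ys1 i = Ys0 i + Tbar + ε i) (hε : ∀ i, |ε i| ≤ c1)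
    (Wt : Ω → Fin n → Bool) (hWtm : Measurable Wt)
    (Q : Fin n → (Fin n → Bool) → ℝ) :
    (∀ v : Fin n → Bool,
      Ttil Q Y Tbar ε W v
        = Omega1 Q Y v + Omega2 Q W v * Tbar + ∑ i : Fin n, ε i * Uval Q W v i) ∧
    (∀ v : Fin n → Bool,
      Omega1 Q Y v + Omega2 Q W v * Tbar - c1 * Omega3 Q W v + c1 * Omega4 Q W v
          ≤ Ttil Q Y Tbar ε W v ∧
      Ttil Q Y Tbar ε W v
          ≤ Omega1 Q Y v + Omega2 Q W v * Tbar + c1 * Omega3 Q W v - c1 * Omega4 Q W v) ∧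
    (∀ That : ℝ,
      P {ω | That ≤ Omega1 Q Y (Wt ω) + Omega2 Q W (Wt ω) * Tbar
              - c1 * Omega3 Q W (Wt ω) + c1 * Omega4 Q W (Wt ω)}
          ≤ P {ω | That ≤ Ttil Q Y Tbar ε W (Wt ω)} ∧
      P {ω | That ≤ Ttil Q Y Tbar ε W (Wt ω)}
          ≤ P {ω | That ≤ Omega1 Q Y (Wt ω) + Omega2 Q W (Wt ω) * Tbar
              + c1 * Omega3 Q W (Wt ω) - c1 * Omega4 Q W (Wt ω)}) := by

  have hdecomp : ∀ v : Fin n → Bool,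
      Ttil Q Y Tbar ε W v
        = Omega1 Q Y v + Omega2 Q W v * Tbar + ∑ i : Fin n, ε i * Uval Q W v i := by
    intro v
    simp only [Ttil, Ytil, Omega1, Omega2, Uval, Finset.mul_sum, Finset.sum_mul,
      ← Finset.sum_add_distrib]
    exact Finset.sum_congr rfl fun i _ => by ring
  have key : ∀ v : Fin n → Bool,
      c1 * Omega4 Q W v - c1 * Omega3 Q W v ≤ ∑ i : Fin n, ε i * Uval Q W v i ∧
      ∑ i : Fin n, ε i * Uval Q W v i ≤ c1 * Omega3 Q W v - c1 * Omega4 Q W v := by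
    intro v
    have h3 : c1 * Omega3 Q W v - c1 * Omega4 Q W v
        = ∑ i : Fin n, (c1 * (if 0 ≤ Uval Q W v i then Uval Q W v i else 0)
            - c1 * (if Uval Q W v i < 0 then Uval Q W v i else 0)) := by
      simp [Omega3, Omega4, Finset.mul_sum, Finset.sum_sub_distrib]
    have h4 : c1 * Omega4 Q W v - c1 * Omega3 Q W v
        = ∑ i : Fin n, (c1 * (if Uval Q W v i < 0 then Uval Q W v i else 0)
            - c1 * (if 0 ≤ Uval Q W v i then Uval Q W v i else 0)) := by
      simp [Omega3, Omega4, Finset.mul_sum, Finset.sum_sub_distrib]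
    constructor
    · rw [h4]
      apply Finset.sum_le_sum
      intro i _
      obtain ⟨he1, he2⟩ := abs_le.mp (hε i)
      rcases le_or_gt 0 (Uval Q W v i) with h | h
      · rw [if_pos h, if_neg (not_lt.mpr h)]
        nlinarith
      · rw [if_pos h, if_neg (not_le.mpr h)]
        nlinarith
    · rw [h3]
      apply Finset.sum_le_sum
      intro i _
      obtain ⟨he1, he2⟩ := abs_le.mp (hε i)
      rcases le_or_gt 0 (Uval Q W v i) with h | h
      · rw [if_pos h, if_neg (not_lt.mpr h)]
        nlinarith
      · rw [if_pos h, if_neg (not_le.mpr h)]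
        nlinarith
  have hbound : ∀ v : Fin n → Bool,
      Omega1 Q Y v + Omega2 Q W v * Tbar - c1 * Omega3 Q W v + c1 * Omega4 Q W v
          ≤ Ttil Q Y Tbar ε W v ∧
      Ttil Q Y Tbar ε W v
          ≤ Omega1 Q Y v + Omega2 Q W v * Tbar + c1 * Omega3 Q W v - c1 * Omega4 Q W v := by
    intro v
    obtain ⟨k1, k2⟩ := key v
    rw [hdecomp v]
    constructor <;> linarith
  refine ⟨hdecomp, hbound, fun That => ⟨?_, ?_⟩⟩
  · apply measure_mono
    intro ω hω
    exact le_trans hω (hbound (Wt ω)).1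
  · apply measure_mono
    intro ω hω
    exact le_trans hω (hbound (Wt ω)).2
end
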